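/- arXiv:1906.04140 — 6 statements merged into one kernel-verified Lean document; each statement's English description precedes it below -/
import Mathlib

section
/- Fusion lemma (train argument): Let U, V, W₁, …, W_m be complex vector spaces, let ζ₁, …, ζ_{m+1} ∈ End(U ⊗ V) with ζ_{m+1} = ζ₁, and for 1 ≤ k ≤ m let ξ_k ∈ End(U ⊗ W_k) and η_k ∈ End(V ⊗ W_k). Regard all of these as endomorphisms of U ⊗ V ⊗ W₁ ⊗ ⋯ ⊗ W_m acting as the identity on the tensor factors not indicated. If for each 1 ≤ k ≤ m the auxiliary Yang–Baxter equation ζ_k ∘ ξ_k ∘ η_k = η_k ∘ ξ_k ∘ ζ_{k+1} holds, then ζ₁ ∘ (ξ₁ ∘ ⋯ ∘ ξ_m) ∘ (η₁ ∘ ⋯ ∘ η_m) = (η₁ ∘ ⋯ ∘ η_m) ∘ (ξ₁ ∘ ⋯ ∘ ξ_m) ∘ ζ₁. -/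

theorem train_aux {M : Type*} [Monoid M] (m : ℕ)
    (ζ : Fin (m + 1) → M) (ξ η : Fin m → M)
    (hcomm : ∀ j k : Fin m, j ≠ k → ξ j * η k = η k * ξ j)
    (hYBE : ∀ k : Fin m,
      ζ k.castSucc * ξ k * η k = η k * ξ k * ζ k.succ) :
    ζ 0 * (List.ofFn ξ).prod * (List.ofFn η).prod =
      (List.ofFn η).prod * (List.ofFn ξ).prod * ζ (Fin.last m) := by
  induction m with
  | zero => simp [Fin.last]
  | succ n ih =>
    have hIH := ih (fun k => ζ k.succ) (fun k => ξ k.succ) (fun k => η k.succ)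
      (fun j k h => hcomm j.succ k.succ (by simpa using h))
      (fun k => by
        have := hYBE k.succ
        simpa only [Fin.succ_castSucc] using this)
    set P := (List.ofFn (fun k : Fin n => ξ k.succ)).prod with hP
    set Q := (List.ofFn (fun k : Fin n => η k.succ)).prod with hQ
    have hPη : Commute (η 0) P := by
      apply Commute.list_prod_right
      intro x hx
      rw [List.mem_ofFn] at hx
      obtain ⟨j, rfl⟩ := hx
      exact (hcomm j.succ 0 (Fin.succ_ne_zero j)).symm
    have hξQ : Commute (ξ 0) Q := by
      apply Commute.list_prod_right
      intro x hx
      rw [List.mem_ofFn] at hx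
      obtain ⟨j, rfl⟩ := hx
      exact hcomm 0 j.succ (Ne.symm (Fin.succ_ne_zero j))
    rw [List.ofFn_succ, List.ofFn_succ, List.prod_cons, List.prod_cons, ← hP, ← hQ]
    have key : ζ 0 * ξ 0 * η 0 = η 0 * ξ 0 * ζ 1 := by
      have := hYBE 0
      simpa using this
    calc ζ 0 * (ξ 0 * P) * (η 0 * Q)
        = (ζ 0 * ξ 0 * η 0) * (P * Q) := by
          simp only [mul_assoc]
          rw [← mul_assoc P, ← hPη.eq, mul_assoc]
      _ = η 0 * ξ 0 * (ζ 1 * P * Q) := by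
          rw [key]; simp only [mul_assoc]
      _ = η 0 * ξ 0 * (Q * P * ζ (Fin.last (n+1))) := by
          have h1 : (ζ 1 : M) = (fun k : Fin (n+1) => ζ k.succ) 0 := by
            norm_num
          have h2 : ζ (Fin.last (n+1)) = (fun k : Fin (n+1) => ζ k.succ) (Fin.last n) := by
            simp [Fin.succ_last]
          rw [h1, h2, hIH]
      _ = η 0 * Q * (ξ 0 * P) * ζ (Fin.last (n+1)) := by
          simp only [mul_assoc]
          rw [← mul_assoc (ξ 0) Q, hξQ.eq, mul_assoc]

/-- fusion lemma / train argument.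
Let `E = U ⊗ V ⊗ W₁ ⊗ ⋯ ⊗ W_m` and regard `ζ₁, …, ζ_{m+1} ∈ End(U ⊗ V)` (with
`ζ_{m+1} = ζ₁`), `ξ_k ∈ End(U ⊗ W_k)` and `η_k ∈ End(V ⊗ W_k)` as endomorphisms of `E`
acting as the identity on the tensor factors not indicated.  Operators supported on
disjoint sets of tensor factors commute; in particular `ξ_j` and `η_k` commute whenever
`j ≠ k` (they share no tensor factor), which is recorded as the hypothesis `hcomm`.
If the auxiliary Yang–Baxter equations `ζ_k ∘ ξ_k ∘ η_k = η_k ∘ ξ_k ∘ ζ_{k+1}`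
hold for `1 ≤ k ≤ m`, then
`ζ₁ ∘ (ξ₁ ∘ ⋯ ∘ ξ_m) ∘ (η₁ ∘ ⋯ ∘ η_m) = (η₁ ∘ ⋯ ∘ η_m) ∘ (ξ₁ ∘ ⋯ ∘ ξ_m) ∘ ζ₁`.

Here `ζ` is indexed by `Fin (m+1)` (so `ζ 0 = ζ₁` and `ζ (Fin.last m) = ζ_{m+1}`),
composition of a list of endomorphisms is `List.prod` (so
`(List.ofFn ξ).prod = ξ₁ ∘ ⋯ ∘ ξ_m`), and multiplication of endomorphisms is
composition. -/
theorem train_argument_fused_yang_baxter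
    (E : Type*) [AddCommGroup E] [Module ℂ E] (m : ℕ)
    (ζ : Fin (m + 1) → Module.End ℂ E) (ξ η : Fin m → Module.End ℂ E)
    (hζ : ζ (Fin.last m) = ζ 0)
    (hcomm : ∀ j k : Fin m, j ≠ k → ξ j * η k = η k * ξ j)
    (hYBE : ∀ k : Fin m,
      ζ k.castSucc * ξ k * η k = η k * ξ k * ζ k.succ) :
    ζ 0 * (List.ofFn ξ).prod * (List.ofFn η).prod =
      (List.ofFn η).prod * (List.ofFn ξ).prod * ζ 0 := by
  have := train_aux m ζ ξ η hcomm hYBE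
  rwa [hζ] at this
end

section
/- Uniqueness and evaluation of the ground state: let w ∈ S_r and let λ ∈ ℤ^r be w-almost dominant with λ_r ≥ 0. Then the Iwahori system 𝔖_{z,λ,w,w} has exactly one admissible state, and its partition function equals v^{ℓ(w)}·∏_{i=1}^{r} z_i^{λ_i + r − i}, where ℓ(w) is the number of inversions of w. -/
noncomputable section
open scoped Classical

/-- A horizontal spin: `none` is `+`, `some c` is the color `c` (colors are integers,
with their usual order). -/
abbrev HS := Option ℤ

/-- The fused Boltzmann weight `wt_z(a, Σ; b, Σ′)` of a vertex with left horizontal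
spin `a`, top vertical spin `Σ`, right horizontal spin `b` and bottom vertical
spin `Σ′`; the five admissible configurations have the indicated weights,
and all other configurations have weight `0`. -/
def fusedWt (v z : ℂ) (a : HS) (S : Finset ℤ) (b : HS) (S' : Finset ℤ) : ℂ :=
  match a, b with
  | none, none => if S' = S then (-v) ^ S.card else 0
  | none, some c =>
      if c ∈ S ∧ S' = S.erase c then
        (-v) ^ (S.filter (fun e => e < c)).card * v ^ (S.filter (fun e => c < e)).card
      else 0
  | some c, none =>
      if c ∉ S ∧ S' = insert c S then
        (1 - v) * z * (-v) ^ (S.filter (fun e => c < e)).card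
      else 0
  | some c, some d =>
      if c = d then (if S' = S then z * v ^ (S.filter (fun e => c < e)).card else 0)
      else if c ∉ S ∧ d ∈ S ∧ c < d ∧ S' = (insert c S).erase d then
        (1 - v) * z * (-v) ^ (S.filter (fun e => c < e ∧ e < d)).card *
          v ^ (S.filter (fun e => d < e)).card
      else 0

/-- The five admissible vertex configurations `(a, Σ; b, Σ′)`
(left, top; right, bottom). -/
def AdmissibleCfg (a : HS) (S : Finset ℤ) (b : HS) (S' : Finset ℤ) : Prop :=
  (a = none ∧ b = none ∧ S' = S) ∨
  (∃ c : ℤ, a = some c ∧ b = some c ∧ S' = S) ∨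
  (∃ c : ℤ, a = none ∧ b = some c ∧ c ∈ S ∧ S' = S.erase c) ∨
  (∃ c : ℤ, a = some c ∧ b = none ∧ c ∉ S ∧ S' = insert c S) ∨
  (∃ c d : ℤ, a = some c ∧ b = some d ∧ c ∉ S ∧ d ∈ S ∧ c < d ∧
    S' = (insert c S).erase d)

/-- A state of the rectangular grid with `r` rows (numbered `1,…,r` top to bottom,
here `0`-indexed by `Fin r`) and `N+1` columns (numbered `N, N−1, …, 0` from left
to right; we index columns by their column number `m : Fin (N+1)`, so the column
to the *left* of column `m` is column `m+1`).

The first component assigns a spin to each horizontal edge: `h i e` for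
`e : Fin (N+2)` is the horizontal edge of row `i` lying immediately to the right
of column `e` when `e < N+1`; thus the vertex in row `i` and column `m` has left
horizontal edge `h i m.succ` and right horizontal edge `h i m.castSucc`,
`h i (Fin.last (N+1))` is the left boundary edge and `h i 0` the right boundary
edge of row `i`.

The second component assigns a finite set of colors to each vertical edge:
`vt m j` for `j : Fin (r+1)` is the vertical edge of column `m` lying above row
`j` when `j < r`; thus the vertex in row `i` and column `m` has top vertical edge
`vt m i.castSucc` and bottom vertical edge `vt m i.succ`, `vt m 0` is the top
boundary edge and `vt m (Fin.last r)` the bottom boundary edge of column `m`. -/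
abbrev GState (r N : ℕ) :=
  (Fin r → Fin (N + 2) → HS) × (Fin (N + 1) → Fin (r + 1) → Finset ℤ)

/-- A state is a *valid (admissible) state of the system with top boundary `top`
and right boundary `right`* if: all left boundary spins are `+`, all bottom
boundary spins are `∅`, the top and right boundary spins are as prescribed, and
every vertex configuration is admissible. -/
def ValidState (r N : ℕ) (top : Fin (N + 1) → Finset ℤ) (right : Fin r → HS)
    (s : GState r N) : Prop :=
  (∀ i, s.1 i (Fin.last (N + 1)) = none) ∧
  (∀ i, s.1 i 0 = right i) ∧
  (∀ m, s.2 m 0 = top m) ∧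
  (∀ m, s.2 m (Fin.last r) = ∅) ∧
  (∀ (i : Fin r) (m : Fin (N + 1)),
    AdmissibleCfg (s.1 i m.succ) (s.2 m i.castSucc) (s.1 i m.castSucc) (s.2 m i.succ))

/-- The Boltzmann weight `β(s)` of a state: the product over all vertices of the
fused weights, the vertices of row `i` carrying the parameter `z_i`. -/
def boltz (r N : ℕ) (v : ℂ) (z : Fin r → ℂ) (s : GState r N) : ℂ :=
  ∏ i : Fin r, ∏ m : Fin (N + 1),
    fusedWt v (z i) (s.1 i m.succ) (s.2 m i.castSucc) (s.1 i m.castSucc) (s.2 m i.succ)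

/-- The partition function: the sum of `β(s)` over all admissible states of the
system (a finite sum: only finitely many states are admissible). -/
def Zsys (r N : ℕ) (v : ℂ) (z : Fin r → ℂ) (top : Fin (N + 1) → Finset ℤ)
    (right : Fin r → HS) : ℂ :=
  ∑ᶠ s : GState r N, if ValidState r N top right s then boltz r N v z s else 0

/-- The top boundary of the system attached to the flag `γ`: the vertical spin in
column `m` is `{γ_{w₂⁻¹(i)} : λ_i + r − i = m}` (all indices `0`-indexed, so the
column number of `i` is `λ_i + (r − 1 − i) = λ_i + Fin.rev i`). -/
def flagTop (r N : ℕ) (γ lam : Fin r → ℤ) (w₂ : Equiv.Perm (Fin r))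
    (m : Fin (N + 1)) : Finset ℤ :=
  (Finset.univ.filter
      (fun i : Fin r => lam i + ((Fin.rev i : ℕ) : ℤ) = (m : ℤ))).image
    (fun i => γ (w₂⁻¹ i))

/-- The right boundary of the system attached to the flag `γ`: the horizontal spin
in row `i` is the color `γ_{w₁⁻¹(i)}`. -/
def flagRight (r : ℕ) (γ : Fin r → ℤ) (w₁ : Equiv.Perm (Fin r)) (i : Fin r) : HS :=
  some (γ (w₁⁻¹ i))

/-- The partition function `Z(𝔖^γ_{z,λ,w₁,w₂})` of the parahoric system attached to
the flag `γ`. -/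
def Zflag (r N : ℕ) (v : ℂ) (z : Fin r → ℂ) (γ lam : Fin r → ℤ)
    (w₁ w₂ : Equiv.Perm (Fin r)) : ℂ :=
  Zsys r N v z (flagTop r N γ lam w₂) (flagRight r γ w₁)

/-- The standard flag `γ_i = r + 1 − i` (so that `γ_{w⁻¹(i)} = r + 1 − w⁻¹(i)`);
`0`-indexed, `stdFlag r i = r − i`. -/
def stdFlag (r : ℕ) (i : Fin r) : ℤ := (r : ℤ) - (i : ℤ)

/-- The partition function `Z(𝔖_{z,λ,w₁,w₂})` of the Iwahori system: colors
`{1,…,r}`, top spin in column `λ_i + r − i` equal to `{r+1−w₂⁻¹(i)}` and right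
spin in row `i` equal to `r+1−w₁⁻¹(i)`. -/
def ZIw (r N : ℕ) (v : ℂ) (z : Fin r → ℂ) (lam : Fin r → ℤ)
    (w₁ w₂ : Equiv.Perm (Fin r)) : ℂ :=
  Zflag r N v z (stdFlag r) lam w₁ w₂

/-- The Coxeter length (number of inversions) on `S_r`. -/
def invLen {r : ℕ} (w : Equiv.Perm (Fin r)) : ℕ :=
  (Finset.univ.filter (fun p : Fin r × Fin r => p.1 < p.2 ∧ w p.2 < w p.1)).card

/-- `λ` is `w`-almost dominant. -/
def AlmostDominant {r : ℕ} (w : Equiv.Perm (Fin r)) (lam : Fin r → ℤ) : Prop :=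
  ∀ (i : ℕ) (h : i + 1 < r),
    (w⁻¹ ⟨i, by omega⟩ < w⁻¹ ⟨i + 1, h⟩ → lam ⟨i + 1, h⟩ ≤ lam ⟨i, by omega⟩) ∧
    (w⁻¹ ⟨i + 1, h⟩ < w⁻¹ ⟨i, by omega⟩ → lam ⟨i + 1, h⟩ ≤ lam ⟨i, by omega⟩ + 1)


namespace IwGS

variable {r : ℕ} (N : ℕ) (w : Equiv.Perm (Fin r)) (lam : Fin r → ℤ)

/-- The column of the color attached to row `i`. -/
def mcol (lam : Fin r → ℤ) (i : Fin r) : ℤ := lam i + ((Fin.rev i : ℕ) : ℤ)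

/-- The color attached to row `i`. -/
def gcol (w : Equiv.Perm (Fin r)) (i : Fin r) : ℤ := (r : ℤ) - ((w⁻¹ i : Fin r) : ℕ)

lemma gcol_def (i : Fin r) : gcol w i = stdFlag r (w⁻¹ i) := by
  simp [gcol, stdFlag]

lemma gcol_inj {a b : Fin r} (h : gcol w a = gcol w b) : a = b := by
  have ha := (w⁻¹ a).isLt
  have hb := (w⁻¹ b).isLt
  have hv : ((w⁻¹ a : Fin r) : ℕ) = ((w⁻¹ b : Fin r) : ℕ) := by
    simp only [gcol] at h; omega
  have : w⁻¹ a = w⁻¹ b := Fin.ext hv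
  simpa using congrArg w this

lemma lam_step (hdom : AlmostDominant w lam) (k : ℕ) (h : k + 1 < r) :
    lam ⟨k + 1, h⟩ ≤ lam ⟨k, by omega⟩ + 1 := by
  obtain ⟨h1, h2⟩ := hdom k h
  rcases lt_or_ge (w⁻¹ ⟨k, by omega⟩) (w⁻¹ ⟨k + 1, h⟩) with hlt | hge
  · have := h1 hlt; omega
  · have hne : w⁻¹ ⟨k + 1, h⟩ ≠ w⁻¹ ⟨k, by omega⟩ := by
      intro he
      have := congrArg Fin.val ((Equiv.injective _) he)
      simp at this
    exact h2 (lt_of_le_of_ne hge hne)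

lemma mcol_step (hdom : AlmostDominant w lam) (a b : Fin r)
    (hab : (b : ℕ) = (a : ℕ) + 1) : mcol lam b ≤ mcol lam a := by
  have h : (a : ℕ) + 1 < r := hab ▸ b.isLt
  have e1 : (⟨(a : ℕ), by omega⟩ : Fin r) = a := Fin.ext rfl
  have e2 : (⟨(a : ℕ) + 1, h⟩ : Fin r) = b := Fin.ext hab.symm
  have hs := lam_step w lam hdom (a : ℕ) h
  rw [e1, e2] at hs
  have hb := b.isLt
  simp only [mcol, Fin.val_rev]
  omega

lemma mcol_anti (hdom : AlmostDominant w lam) (a b : Fin r)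
    (hab : (a : ℕ) ≤ (b : ℕ)) : mcol lam b ≤ mcol lam a := by
  have key : ∀ n : ℕ, ∀ b : Fin r, (b : ℕ) = (a : ℕ) + n → mcol lam b ≤ mcol lam a := by
    intro n
    induction n with
    | zero =>
      intro b hb
      have : b = a := Fin.ext (by omega)
      rw [this]
    | succ n ih =>
      intro b hb
      have hb' : (a : ℕ) + n < r := by have := b.isLt; omega
      set b' : Fin r := ⟨(a : ℕ) + n, hb'⟩ with hb'def
      have hv : (b' : ℕ) = (a : ℕ) + n := rfl
      have h1 : mcol lam b ≤ mcol lam b' := mcol_step w lam hdom b' b (by omega)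
      exact le_trans h1 (ih b' rfl)
  exact key ((b : ℕ) - (a : ℕ)) b (by omega)

lemma winv_step (hdom : AlmostDominant w lam) (a b : Fin r)
    (hab : (b : ℕ) = (a : ℕ) + 1) (he : mcol lam a = mcol lam b) :
    ((w⁻¹ b : Fin r) : ℕ) < ((w⁻¹ a : Fin r) : ℕ) := by
  have h : (a : ℕ) + 1 < r := hab ▸ b.isLt
  have e1 : (⟨(a : ℕ), by omega⟩ : Fin r) = a := Fin.ext rfl
  have e2 : (⟨(a : ℕ) + 1, h⟩ : Fin r) = b := Fin.ext hab.symm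
  obtain ⟨h1, h2⟩ := hdom (a : ℕ) h
  rw [e1, e2] at h1 h2
  have hbb := b.isLt
  have hl : lam a + 1 ≤ lam b := by
    simp only [mcol, Fin.val_rev] at he
    omega
  by_contra hc
  push_neg at hc
  have hvne : (a : ℕ) ≠ (b : ℕ) := by omega
  have hne : w⁻¹ a ≠ w⁻¹ b := by
    intro hee
    exact hvne (congrArg Fin.val ((Equiv.injective _) hee))
  have hlt : w⁻¹ a < w⁻¹ b := lt_of_le_of_ne (Fin.le_def.mpr hc) hne
  have := h1 hlt
  omega

lemma winv_block (hdom : AlmostDominant w lam) (a b : Fin r)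
    (hab : (a : ℕ) < (b : ℕ)) (he : mcol lam a = mcol lam b) :
    ((w⁻¹ b : Fin r) : ℕ) < ((w⁻¹ a : Fin r) : ℕ) := by
  have key : ∀ n : ℕ, ∀ b : Fin r, (b : ℕ) = (a : ℕ) + (n + 1) →
      mcol lam a = mcol lam b → ((w⁻¹ b : Fin r) : ℕ) < ((w⁻¹ a : Fin r) : ℕ) := by
    intro n
    induction n with
    | zero =>
      intro b hb he
      exact winv_step w lam hdom a b (by omega) he
    | succ n ih =>
      intro b hb he
      have hbr := b.isLt
      have hmid : ((a : ℕ) + (n + 1)) < r := by omega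
      set b' : Fin r := ⟨(a : ℕ) + (n + 1), hmid⟩ with hb'def
      have hv : (b' : ℕ) = (a : ℕ) + (n + 1) := rfl
      have h1 : mcol lam b ≤ mcol lam b' := mcol_anti w lam hdom b' b (by omega)
      have h2 : mcol lam b' ≤ mcol lam a := mcol_anti w lam hdom a b' (by omega)
      have he1 : mcol lam a = mcol lam b' := le_antisymm (by omega) h2
      have he2 : mcol lam b' = mcol lam b := by omega
      have hup : ((w⁻¹ b' : Fin r) : ℕ) < ((w⁻¹ a : Fin r) : ℕ) := ih b' rfl he1
      have hlow : ((w⁻¹ b : Fin r) : ℕ) < ((w⁻¹ b' : Fin r) : ℕ) :=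
        winv_step w lam hdom b' b (by omega) he2
      omega
  exact key ((b : ℕ) - (a : ℕ) - 1) b (by omega) he

lemma gcol_lt (hdom : AlmostDominant w lam) (a b : Fin r)
    (hab : (a : ℕ) < (b : ℕ)) (he : mcol lam a = mcol lam b) :
    gcol w a < gcol w b := by
  have := winv_block w lam hdom a b hab he
  have ha := (w⁻¹ a).isLt
  have hb := (w⁻¹ b).isLt
  simp only [gcol]
  omega

lemma mcol_nonneg (hdom : AlmostDominant w lam)
    (hlast : ∀ h : 0 < r, 0 ≤ lam ⟨r - 1, Nat.sub_lt h Nat.one_pos⟩) (i : Fin r) :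
    0 ≤ mcol lam i := by
  have hi := i.isLt
  have h0 : 0 < r := by omega
  have h1 : mcol lam ⟨r - 1, by omega⟩ ≤ mcol lam i :=
    mcol_anti w lam hdom i ⟨r - 1, by omega⟩ (by simp; omega)
  have h2 := hlast h0
  have h3 : mcol lam ⟨r - 1, by omega⟩ = lam ⟨r - 1, by omega⟩ := by
    simp only [mcol, Fin.val_rev]
    omega
  omega

lemma mcol_le_N (hdom : AlmostDominant w lam)
    (hN : ∀ h : 0 < r, lam ⟨0, h⟩ + (r : ℤ) - 1 ≤ (N : ℤ)) (i : Fin r) :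
    mcol lam i ≤ (N : ℤ) := by
  have hi := i.isLt
  have h0 : 0 < r := by omega
  have h1 : mcol lam i ≤ mcol lam ⟨0, h0⟩ :=
    mcol_anti w lam hdom ⟨0, h0⟩ i (by simp)
  have h2 := hN h0
  have h3 : mcol lam ⟨0, h0⟩ = lam ⟨0, h0⟩ + ((r : ℤ) - 1) := by
    simp only [mcol, Fin.val_rev]
    omega
  omega


/-- Horizontal edges of the ground state. -/
def gH (i : Fin r) (e : Fin (N + 2)) : HS :=
  if ((e : ℕ) : ℤ) ≤ mcol lam i then some (gcol w i) else none

/-- Vertical edges of the ground state. -/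
def gV (m : Fin (N + 1)) (j : Fin (r + 1)) : Finset ℤ :=
  (Finset.univ.filter
      (fun a : Fin r => mcol lam a = ((m : ℕ) : ℤ) ∧ (j : ℕ) ≤ (a : ℕ))).image (gcol w)

/-- The ground state. -/
def gS : GState r N := (fun i e => gH N w lam i e, fun m j => gV N w lam m j)

lemma mem_gV {x : ℤ} {m : Fin (N + 1)} {j : Fin (r + 1)} :
    x ∈ gV N w lam m j ↔
      ∃ a : Fin r, mcol lam a = ((m : ℕ) : ℤ) ∧ (j : ℕ) ≤ (a : ℕ) ∧ gcol w a = x := by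
  simp [gV, and_assoc]

lemma gV_eq_empty {m : Fin (N + 1)} {j : Fin (r + 1)}
    (h : ∀ a : Fin r, mcol lam a = ((m : ℕ) : ℤ) → (j : ℕ) ≤ (a : ℕ) → False) :
    gV N w lam m j = ∅ := by
  rw [gV, Finset.filter_false_of_mem, Finset.image_empty]
  intro a _
  intro hc
  exact h a hc.1 hc.2

lemma gV_empty_of_lt (hdom : AlmostDominant w lam) {i : Fin r} {m : Fin (N + 1)}
    {j : Fin (r + 1)} (hij : (i : ℕ) ≤ (j : ℕ)) (h : mcol lam i < ((m : ℕ) : ℤ)) :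
    gV N w lam m j = ∅ := by
  apply gV_eq_empty
  intro a ha hja
  have := mcol_anti w lam hdom i a (by omega)
  omega

lemma gV_succ_of_ne (i : Fin r) (m : Fin (N + 1))
    (hm : mcol lam i ≠ ((m : ℕ) : ℤ)) :
    gV N w lam m i.succ = gV N w lam m i.castSucc := by
  apply Finset.ext
  intro x
  rw [mem_gV, mem_gV]
  constructor
  · rintro ⟨a, ha, hja, rfl⟩
    refine ⟨a, ha, ?_, rfl⟩
    simp only [Fin.val_succ] at hja
    simp only [Fin.coe_castSucc]
    omega
  · rintro ⟨a, ha, hja, rfl⟩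
    refine ⟨a, ha, ?_, rfl⟩
    have hne : a ≠ i := by
      intro hai
      exact hm (hai ▸ ha)
    have : (a : ℕ) ≠ (i : ℕ) := fun hv => hne (Fin.ext hv)
    simp only [Fin.coe_castSucc] at hja
    simp only [Fin.val_succ]
    omega

lemma gV_erase (hdom : AlmostDominant w lam) (i : Fin r) (m : Fin (N + 1))
    (hm : mcol lam i = ((m : ℕ) : ℤ)) :
    gV N w lam m i.succ = (gV N w lam m i.castSucc).erase (gcol w i) := by
  apply Finset.ext
  intro x
  rw [Finset.mem_erase, mem_gV, mem_gV]
  constructor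
  · rintro ⟨a, ha, hja, rfl⟩
    simp only [Fin.val_succ] at hja
    refine ⟨?_, a, ha, by simp only [Fin.coe_castSucc]; omega, rfl⟩
    intro hg
    have := gcol_inj w hg
    subst this
    omega
  · rintro ⟨hne, a, ha, hja, rfl⟩
    refine ⟨a, ha, ?_, rfl⟩
    have hai : a ≠ i := fun h => hne (by rw [h])
    have : (a : ℕ) ≠ (i : ℕ) := fun hv => hai (Fin.ext hv)
    simp only [Fin.coe_castSucc] at hja
    simp only [Fin.val_succ]
    omega

lemma gV_mem_self (i : Fin r) (m : Fin (N + 1)) (hm : mcol lam i = ((m : ℕ) : ℤ)) :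
    gcol w i ∈ gV N w lam m i.castSucc := by
  rw [mem_gV]
  exact ⟨i, hm, le_refl _, rfl⟩

lemma flagTop_eq_gV (m : Fin (N + 1)) :
    flagTop r N (stdFlag r) lam w m = gV N w lam m 0 := by
  apply Finset.ext
  intro x
  simp only [flagTop, gV, Finset.mem_image, Finset.mem_filter, Finset.mem_univ, true_and,
    mcol, gcol, stdFlag]
  constructor
  · rintro ⟨a, ha, rfl⟩
    exact ⟨a, Finset.mem_filter.mpr ⟨Finset.mem_univ _, ha, Nat.zero_le _⟩, rfl⟩
  · rintro ⟨a, hmem, rfl⟩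
    exact ⟨a, (Finset.mem_filter.mp hmem).2.1, rfl⟩


lemma gS_valid (hdom : AlmostDominant w lam)
    (hlast : ∀ h : 0 < r, 0 ≤ lam ⟨r - 1, Nat.sub_lt h Nat.one_pos⟩)
    (hN : ∀ h : 0 < r, lam ⟨0, h⟩ + (r : ℤ) - 1 ≤ (N : ℤ)) :
    ValidState r N (flagTop r N (stdFlag r) lam w) (flagRight r (stdFlag r) w)
      (gS N w lam) := by
  have hle : ∀ i : Fin r, mcol lam i ≤ (N : ℤ) := mcol_le_N N w lam hdom hN
  have hge : ∀ i : Fin r, 0 ≤ mcol lam i := mcol_nonneg w lam hdom hlast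
  refine ⟨?_, ?_, ?_, ?_, ?_⟩
  · intro i
    have := hle i
    simp only [gS, gH, Fin.val_last]
    rw [if_neg (by push_cast; omega)]
  · intro i
    have := hge i
    simp only [gS, gH, Fin.val_zero]
    simp only [Nat.cast_zero, this, ↓reduceIte]
    simp [flagRight, gcol_def]
  · intro m
    exact (flagTop_eq_gV N w lam m).symm
  · intro m
    show gV N w lam m (Fin.last r) = ∅
    apply gV_eq_empty
    intro a _ h
    have := a.isLt
    simp only [Fin.val_last] at h
    omega
  · intro i m
    rcases lt_trichotomy ((m : ℕ) : ℤ) (mcol lam i) with hlt | heq | hgt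
    · have ha : (gS N w lam).1 i m.succ = some (gcol w i) := by
        simp only [gS, gH, Fin.val_succ]
        rw [if_pos (by push_cast; omega)]
      have hb : (gS N w lam).1 i m.castSucc = some (gcol w i) := by
        simp only [gS, gH, Fin.coe_castSucc]
        rw [if_pos (by omega)]
      refine Or.inr (Or.inl ⟨gcol w i, ha, hb, ?_⟩)
      show gV N w lam m i.succ = gV N w lam m i.castSucc
      exact gV_succ_of_ne N w lam i m (by omega)
    · have ha : (gS N w lam).1 i m.succ = none := by
        simp only [gS, gH, Fin.val_succ]
        rw [if_neg (by push_cast; omega)]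
      have hb : (gS N w lam).1 i m.castSucc = some (gcol w i) := by
        simp only [gS, gH, Fin.coe_castSucc]
        rw [if_pos (by omega)]
      exact Or.inr (Or.inr (Or.inl ⟨gcol w i, ha, hb,
        gV_mem_self N w lam i m heq.symm, gV_erase N w lam hdom i m heq.symm⟩))
    · have ha : (gS N w lam).1 i m.succ = none := by
        simp only [gS, gH, Fin.val_succ]
        rw [if_neg (by push_cast; omega)]
      have hb : (gS N w lam).1 i m.castSucc = none := by
        simp only [gS, gH, Fin.coe_castSucc]
        rw [if_neg (by omega)]
      refine Or.inl ⟨ha, hb, ?_⟩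
      show gV N w lam m i.succ = gV N w lam m i.castSucc
      rw [gV_empty_of_lt N w lam hdom (i := i) (by simp [Fin.val_succ]) hgt,
        gV_empty_of_lt N w lam hdom (i := i) (by simp [Fin.coe_castSucc]) hgt]


lemma row_forced (hdom : AlmostDominant w lam)
    (hlast : ∀ h : 0 < r, 0 ≤ lam ⟨r - 1, Nat.sub_lt h Nat.one_pos⟩)
    (hN : ∀ h : 0 < r, lam ⟨0, h⟩ + (r : ℤ) - 1 ≤ (N : ℤ))
    (s : GState r N)
    (hleft : ∀ i, s.1 i (Fin.last (N + 1)) = none)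
    (hright : ∀ i, s.1 i 0 = flagRight r (stdFlag r) w i)
    (hadm : ∀ (i : Fin r) (m : Fin (N + 1)),
      AdmissibleCfg (s.1 i m.succ) (s.2 m i.castSucc) (s.1 i m.castSucc) (s.2 m i.succ))
    (i : Fin r)
    (htop : ∀ m, s.2 m i.castSucc = gV N w lam m i.castSucc) :
    (∀ e, s.1 i e = gH N w lam i e) ∧ (∀ m, s.2 m i.succ = gV N w lam m i.succ) := by
  set M : ℤ := mcol lam i with hMdef
  set c : ℤ := gcol w i with hcdef
  have hMN : M ≤ (N : ℤ) := mcol_le_N N w lam hdom hN i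
  have hM0 : 0 ≤ M := mcol_nonneg w lam hdom hlast i
  have hcnot : ∀ m : Fin (N + 1), ((m : ℕ) : ℤ) ≠ M → c ∉ s.2 m i.castSucc := by
    intro m hm hmem
    rw [htop m, mem_gV] at hmem
    obtain ⟨a, ha, _, hga⟩ := hmem
    have hai : a = i := gcol_inj w hga
    subst hai
    apply hm
    rw [hMdef, ← ha]
  have hempty : ∀ m : Fin (N + 1), M < ((m : ℕ) : ℤ) → s.2 m i.castSucc = ∅ := by
    intro m hm
    rw [htop m]
    exact gV_empty_of_lt N w lam hdom (i := i) (by simp) (by rw [← hMdef]; omega)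
  -- Step A: everything to the left of column M is `+`
  have hA : ∀ e : Fin (N + 2), M < ((e : ℕ) : ℤ) → s.1 i e = none := by
    intro e
    induction e using Fin.reverseInduction with
    | last => intro _; exact hleft i
    | cast m ih =>
      intro hMm
      simp only [Fin.coe_castSucc] at hMm
      have ha : s.1 i m.succ = none := by
        apply ih
        simp only [Fin.val_succ]
        push_cast
        omega
      have htope : s.2 m i.castSucc = ∅ := hempty m hMm
      have adm := hadm i m
      rw [ha, htope] at adm
      rcases adm with ⟨-, hb, -⟩ | ⟨c', ha', -⟩ | ⟨c', -, -, hc, -⟩ | ⟨c', ha', -⟩ |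
        ⟨c', d, ha', -⟩
      · exact hb
      · exact absurd ha' (by simp)
      · exact absurd hc (Finset.notMem_empty c')
      · exact absurd ha' (by simp)
      · exact absurd ha' (by simp)
  -- Step B: once the color `c` is missed, it can never reach the right boundary
  have hNR : ∀ k : ℕ, ∀ hk : k < N + 2, ((k : ℤ) ≤ M) →
      s.1 i ⟨k, hk⟩ ≠ some c → s.1 i 0 ≠ some c := by
    intro k
    induction k with
    | zero =>
      intro hk _ hne
      have h0 : (⟨0, hk⟩ : Fin (N + 2)) = 0 := Fin.ext (by simp)
      rwa [h0] at hne
    | succ k ih =>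
      intro hk hle hne
      have hkN : k < N + 1 := by omega
      set mf : Fin (N + 1) := ⟨k, hkN⟩ with hmfdef
      have hsucc : mf.succ = (⟨k + 1, hk⟩ : Fin (N + 2)) := Fin.ext (by simp [hmfdef])
      have hcnot' : c ∉ s.2 mf i.castSucc := by
        apply hcnot
        show ((k : ℕ) : ℤ) ≠ M
        omega
      have adm := hadm i mf
      rw [hsucc] at adm
      have hb : s.1 i mf.castSucc ≠ some c := by
        rcases adm with ⟨-, hb', -⟩ | ⟨c', ha', hb', -⟩ | ⟨c', -, hb', hmem, -⟩ |
          ⟨c', -, hb', -, -⟩ | ⟨c', d, ha', hb', -, hmem, -, -⟩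
        · rw [hb']; simp
        · rw [hb']
          intro hcc
          have hcc' : c' = c := by injection hcc
          exact hne (by rw [ha', hcc'])
        · rw [hb']
          intro hcc
          apply hcnot'
          have hcc' : c' = c := by injection hcc
          rwa [hcc'] at hmem
        · rw [hb']; simp
        · rw [hb']
          intro hcc
          apply hcnot'
          have hcc' : d = c := by injection hcc
          rwa [hcc'] at hmem
      have hcast : mf.castSucc = (⟨k, by omega⟩ : Fin (N + 2)) := Fin.ext (by simp [hmfdef])
      rw [hcast] at hb
      exact ih (by omega) (by omega) hb
  -- the right boundary forces the color `c`
  have hforce : ∀ mm : Fin (N + 1), ((mm : ℕ) : ℤ) ≤ M →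
      s.1 i mm.castSucc ≠ some c → False := by
    intro mm hmm hbne
    have h0 : s.1 i 0 ≠ some c := by
      apply hNR (mm : ℕ) (by omega) (by omega)
      have hcast : (⟨(mm : ℕ), by omega⟩ : Fin (N + 2)) = mm.castSucc := Fin.ext (by simp)
      rw [hcast]
      exact hbne
    apply h0
    rw [hright i]
    simp [flagRight, hcdef, gcol_def]
  -- Step C: the vertex in column M
  have hMnat : ((M.toNat : ℕ) : ℤ) = M := Int.toNat_of_nonneg hM0
  have hMfN : M.toNat < N + 1 := by omega
  set Mf : Fin (N + 1) := ⟨M.toNat, hMfN⟩ with hMfdef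
  have haM : s.1 i Mf.succ = none := by
    apply hA
    simp only [Fin.val_succ, hMfdef]
    push_cast
    omega
  have hbM : s.1 i Mf.castSucc = some c := by
    by_contra hbne
    exact hforce Mf (by simp [hMfdef]; omega) hbne
  have hSM : s.2 Mf i.succ = (s.2 Mf i.castSucc).erase c := by
    have admM := hadm i Mf
    rw [haM, hbM] at admM
    rcases admM with ⟨-, hb', -⟩ | ⟨c', ha', -, -⟩ | ⟨c', -, hb', hmem, hS⟩ |
      ⟨c', ha', -, -, -⟩ | ⟨c', d, ha', -, -, -, -, -⟩
    · exact absurd hb' (by simp)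
    · exact absurd ha' (by simp)
    · have hcc' : c = c' := by injection hb'
      rw [hS, ← hcc']
    · exact absurd ha' (by simp)
    · exact absurd ha' (by simp)
  -- Step D: to the right of column M the color `c` travels
  have hD : ∀ k : ℕ, k ≤ M.toNat → s.1 i ⟨M.toNat - k, by omega⟩ = some c := by
    intro k
    induction k with
    | zero =>
      intro _
      have h0 : (⟨M.toNat - 0, by omega⟩ : Fin (N + 2)) = Mf.castSucc :=
        Fin.ext (by simp [hMfdef])
      rw [h0]
      exact hbM
    | succ k ih =>
      intro hk
      have hprev := ih (by omega)
      have hkN2 : M.toNat - (k + 1) < N + 1 := by omega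
      set mf : Fin (N + 1) := ⟨M.toNat - (k + 1), hkN2⟩ with hmfdef
      have hsucc : mf.succ = (⟨M.toNat - k, by omega⟩ : Fin (N + 2)) :=
        Fin.ext (by simp [hmfdef]; omega)
      have hcast : mf.castSucc = (⟨M.toNat - (k + 1), by omega⟩ : Fin (N + 2)) :=
        Fin.ext (by simp [hmfdef])
      have adm := hadm i mf
      rw [hsucc, hprev] at adm
      have hmmle : ((mf : ℕ) : ℤ) ≤ M := by simp [hmfdef]; omega
      rw [← hcast]
      rcases adm with ⟨ha', -, -⟩ | ⟨c', ha', hb', -⟩ | ⟨c', ha', -, -, -⟩ |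
        ⟨c', ha', hb', -, -⟩ | ⟨c', d, ha', hb', -, -, hcd, -⟩
      · exact absurd ha' (by simp)
      · have hcc' : c = c' := by injection ha'
        rw [hb', ← hcc']
      · exact absurd ha' (by simp)
      · exact (hforce mf hmmle (by rw [hb']; simp)).elim
      · refine (hforce mf hmmle ?_).elim
        rw [hb']
        intro hcc
        have h1 : c = c' := by injection ha'
        have h2 : d = c := by injection hcc
        omega
  -- Step E: to the right of column M the bottom sets equal the top sets
  have hE : ∀ m : Fin (N + 1), ((m : ℕ) : ℤ) < M → s.2 m i.succ = s.2 m i.castSucc := by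
    intro m hm
    have hal : s.1 i m.succ = some c := by
      have h1 : (m : ℕ) + 1 ≤ M.toNat := by omega
      have h2 := hD (M.toNat - ((m : ℕ) + 1)) (by omega)
      have heq : (⟨M.toNat - (M.toNat - ((m : ℕ) + 1)), by omega⟩ : Fin (N + 2)) = m.succ :=
        Fin.ext (by simp [Fin.val_succ]; omega)
      rwa [heq] at h2
    have hbr : s.1 i m.castSucc = some c := by
      have h2 := hD (M.toNat - (m : ℕ)) (by omega)
      have heq : (⟨M.toNat - (M.toNat - (m : ℕ)), by omega⟩ : Fin (N + 2)) = m.castSucc :=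
        Fin.ext (by simp; omega)
      rwa [heq] at h2
    have adm := hadm i m
    rw [hal, hbr] at adm
    rcases adm with ⟨ha', -, -⟩ | ⟨c', -, -, hS⟩ | ⟨c', ha', -, -, -⟩ |
      ⟨c', -, hb', -, -⟩ | ⟨c', d, ha', hb', -, -, hcd, -⟩
    · exact absurd ha' (by simp)
    · exact hS
    · exact absurd ha' (by simp)
    · exact absurd hb' (by simp)
    · have h1 : c = c' := by injection ha'
      have h2 : c = d := by injection hb'
      omega
  constructor
  · intro e
    by_cases he : ((e : ℕ) : ℤ) ≤ M
    · have h2 := hD (M.toNat - (e : ℕ)) (by omega)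
      have heq : (⟨M.toNat - (M.toNat - (e : ℕ)), by omega⟩ : Fin (N + 2)) = e :=
        Fin.ext (by simp; omega)
      rw [heq] at h2
      rw [h2]
      simp only [gH]
      rw [if_pos (by rw [← hMdef]; exact he), hcdef]
    · rw [hA e (by omega)]
      simp only [gH]
      rw [if_neg (by rw [← hMdef]; exact he)]
  · intro m
    rcases lt_trichotomy ((m : ℕ) : ℤ) M with hlt | heq | hgt
    · rw [hE m hlt, htop m, gV_succ_of_ne N w lam i m (by rw [← hMdef]; omega)]
    · have hmMf : m = Mf := Fin.ext (by simp [hMfdef]; omega)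
      rw [hmMf, hSM, htop Mf, gV_erase N w lam hdom i Mf
        (by rw [← hMdef]; simp [hMfdef]; omega), hcdef]
    · have ha' : s.1 i m.succ = none := by
        apply hA
        simp only [Fin.val_succ]
        push_cast
        omega
      have htope := hempty m hgt
      have adm := hadm i m
      rw [ha', htope] at adm
      have hS : s.2 m i.succ = ∅ := by
        rcases adm with ⟨-, -, hS⟩ | ⟨c', ha'', -⟩ | ⟨c', -, -, hc, -⟩ | ⟨c', ha'', -⟩ |
          ⟨c', d, ha'', -⟩
        · exact hS
        · exact absurd ha'' (by simp)
        · exact absurd hc (Finset.notMem_empty c')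
        · exact absurd ha'' (by simp)
        · exact absurd ha'' (by simp)
      rw [hS, gV_empty_of_lt N w lam hdom (i := i) (j := i.succ) (by simp)
        (by rw [← hMdef]; omega)]


lemma uniq (hdom : AlmostDominant w lam)
    (hlast : ∀ h : 0 < r, 0 ≤ lam ⟨r - 1, Nat.sub_lt h Nat.one_pos⟩)
    (hN : ∀ h : 0 < r, lam ⟨0, h⟩ + (r : ℤ) - 1 ≤ (N : ℤ))
    (s : GState r N)
    (hs : ValidState r N (flagTop r N (stdFlag r) lam w) (flagRight r (stdFlag r) w) s) :
    s = gS N w lam := by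
  obtain ⟨hleft, hright, htop, hbot, hadm⟩ := hs
  have hrow : ∀ k : ℕ, ∀ hk : k ≤ r, ∀ m : Fin (N + 1),
      s.2 m ⟨k, by omega⟩ = gV N w lam m ⟨k, by omega⟩ := by
    intro k
    induction k with
    | zero =>
      intro hk m
      have h0 : (⟨0, by omega⟩ : Fin (r + 1)) = 0 := Fin.ext (by simp)
      rw [h0, htop m, flagTop_eq_gV]
    | succ k ih =>
      intro hk m
      have hkr : k < r := by omega
      have hcs : (⟨k, by omega⟩ : Fin (r + 1)) = (⟨k, hkr⟩ : Fin r).castSucc :=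
        Fin.ext (by simp)
      have hss : (⟨k + 1, by omega⟩ : Fin (r + 1)) = (⟨k, hkr⟩ : Fin r).succ :=
        Fin.ext (by simp)
      have htopk : ∀ m : Fin (N + 1), s.2 m ((⟨k, hkr⟩ : Fin r).castSucc) =
          gV N w lam m ((⟨k, hkr⟩ : Fin r).castSucc) := by
        intro m
        rw [← hcs]
        exact ih (by omega) m
      have hres := (row_forced N w lam hdom hlast hN s hleft hright hadm ⟨k, hkr⟩ htopk).2 m
      rw [hss]
      exact hres
  have h1 : s.1 = (gS N w lam).1 := by
    funext i e
    have htopk : ∀ m : Fin (N + 1), s.2 m i.castSucc = gV N w lam m i.castSucc := by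
      intro m
      have hcs : (⟨(i : ℕ), by omega⟩ : Fin (r + 1)) = i.castSucc := Fin.ext (by simp)
      rw [← hcs]
      exact hrow (i : ℕ) (by omega) m
    exact (row_forced N w lam hdom hlast hN s hleft hright hadm i htopk).1 e
  have h2 : s.2 = (gS N w lam).2 := by
    funext m j
    have hcs : (⟨(j : ℕ), by omega⟩ : Fin (r + 1)) = j := Fin.ext (by simp)
    rw [← hcs]
    exact hrow (j : ℕ) (by omega) m
  exact Prod.ext h1 h2


/-- The number of inversions contributed by the vertex in row `i`, column `m`. -/
def cnt (i : Fin r) (m : Fin (N + 1)) : ℕ :=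
  (Finset.univ.filter (fun j : Fin r =>
    ((i : ℕ) < (j : ℕ) ∧ gcol w i < gcol w j) ∧ mcol lam j = ((m : ℕ) : ℤ))).card

lemma filter_gt_card (i : Fin r) (m : Fin (N + 1)) :
    ((gV N w lam m i.castSucc).filter (fun e => gcol w i < e)).card = cnt N w lam i m := by
  have himg : (gV N w lam m i.castSucc).filter (fun e => gcol w i < e) =
      (Finset.univ.filter (fun j : Fin r =>
        ((i : ℕ) < (j : ℕ) ∧ gcol w i < gcol w j) ∧ mcol lam j = ((m : ℕ) : ℤ))).image
        (gcol w) := by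
    apply Finset.ext
    intro x
    simp only [Finset.mem_filter, Finset.mem_image, Finset.mem_univ, true_and, mem_gV]
    constructor
    · rintro ⟨⟨a, ha, hia, rfl⟩, hlt⟩
      simp only [Fin.coe_castSucc] at hia
      refine ⟨a, ⟨⟨?_, hlt⟩, ha⟩, rfl⟩
      rcases lt_or_eq_of_le hia with h | h
      · exact h
      · have hai : a = i := Fin.ext h.symm
        subst hai
        exact absurd hlt (lt_irrefl _)
    · rintro ⟨a, ⟨⟨hia, hlt⟩, ha⟩, rfl⟩
      exact ⟨⟨a, ha, by simp only [Fin.coe_castSucc]; omega, rfl⟩, hlt⟩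
  rw [himg, Finset.card_image_of_injOn (fun a _ b _ h => gcol_inj w h)]
  rfl

lemma cnt_zero_of_gt (hdom : AlmostDominant w lam) (i : Fin r) (m : Fin (N + 1))
    (h : mcol lam i < ((m : ℕ) : ℤ)) : cnt N w lam i m = 0 := by
  rw [cnt, Finset.card_eq_zero, Finset.filter_eq_empty_iff]
  rintro j - ⟨⟨hij, -⟩, hm⟩
  have := mcol_anti w lam hdom i j (le_of_lt hij)
  omega

lemma wt_factor (hdom : AlmostDominant w lam)
    (hlast : ∀ h : 0 < r, 0 ≤ lam ⟨r - 1, Nat.sub_lt h Nat.one_pos⟩)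
    (hN : ∀ h : 0 < r, lam ⟨0, h⟩ + (r : ℤ) - 1 ≤ (N : ℤ))
    (v : ℂ) (z : ℂ) (i : Fin r) (m : Fin (N + 1)) :
    fusedWt v z ((gS N w lam).1 i m.succ) ((gS N w lam).2 m i.castSucc)
        ((gS N w lam).1 i m.castSucc) ((gS N w lam).2 m i.succ) =
      (if ((m : ℕ) : ℤ) ≤ mcol lam i then v ^ cnt N w lam i m else 1) *
        (if ((m : ℕ) : ℤ) < mcol lam i then z else 1) := by
  rcases lt_trichotomy ((m : ℕ) : ℤ) (mcol lam i) with hlt | heq | hgt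
  · have ha : (gS N w lam).1 i m.succ = some (gcol w i) := by
      simp only [gS, gH, Fin.val_succ]
      rw [if_pos (by push_cast; omega)]
    have hb : (gS N w lam).1 i m.castSucc = some (gcol w i) := by
      simp only [gS, gH, Fin.coe_castSucc]
      rw [if_pos (by omega)]
    have hS : (gS N w lam).2 m i.succ = (gS N w lam).2 m i.castSucc := by
      show gV N w lam m i.succ = gV N w lam m i.castSucc
      exact gV_succ_of_ne N w lam i m (by omega)
    rw [ha, hb, hS]
    show fusedWt v z (some (gcol w i)) (gV N w lam m i.castSucc) (some (gcol w i))
        (gV N w lam m i.castSucc) = _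
    simp only [fusedWt]
    rw [if_pos trivial, if_pos trivial, filter_gt_card N w lam i m,
      if_pos (le_of_lt hlt), if_pos hlt]
    ring
  · have ha : (gS N w lam).1 i m.succ = none := by
      simp only [gS, gH, Fin.val_succ]
      rw [if_neg (by push_cast; omega)]
    have hb : (gS N w lam).1 i m.castSucc = some (gcol w i) := by
      simp only [gS, gH, Fin.coe_castSucc]
      rw [if_pos (by omega)]
    have hS : (gS N w lam).2 m i.succ = ((gS N w lam).2 m i.castSucc).erase (gcol w i) := by
      show gV N w lam m i.succ = (gV N w lam m i.castSucc).erase (gcol w i)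
      exact gV_erase N w lam hdom i m heq.symm
    rw [ha, hb, hS]
    show fusedWt v z none (gV N w lam m i.castSucc) (some (gcol w i))
        ((gV N w lam m i.castSucc).erase (gcol w i)) = _
    simp only [fusedWt]
    rw [if_pos (show gcol w i ∈ gV N w lam m i.castSucc ∧ True from
      ⟨gV_mem_self N w lam i m heq.symm, trivial⟩)]
    have hflt : (gV N w lam m i.castSucc).filter (fun e => e < gcol w i) = ∅ := by
      rw [Finset.filter_eq_empty_iff]
      intro x hx
      rw [mem_gV] at hx
      obtain ⟨a, ham, hia, rfl⟩ := hx
      simp only [Fin.coe_castSucc] at hia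
      rcases lt_or_eq_of_le hia with h | h
      · have := gcol_lt w lam hdom i a h (by omega)
        omega
      · have hai : a = i := Fin.ext h.symm
        subst hai
        exact lt_irrefl _
    rw [hflt, filter_gt_card N w lam i m]
    simp only [Finset.card_empty, pow_zero, one_mul]
    rw [if_pos (le_of_eq heq), if_neg (by omega), mul_one]
  · have ha : (gS N w lam).1 i m.succ = none := by
      simp only [gS, gH, Fin.val_succ]
      rw [if_neg (by push_cast; omega)]
    have hb : (gS N w lam).1 i m.castSucc = none := by
      simp only [gS, gH, Fin.coe_castSucc]
      rw [if_neg (by omega)]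
    have hS : (gS N w lam).2 m i.castSucc = ∅ :=
      gV_empty_of_lt N w lam hdom (i := i) (by simp) hgt
    have hS' : (gS N w lam).2 m i.succ = ∅ :=
      gV_empty_of_lt N w lam hdom (i := i) (by simp) hgt
    rw [ha, hb, hS, hS']
    show fusedWt v z none ∅ none ∅ = _
    simp only [fusedWt]
    rw [if_pos trivial, if_neg (show ¬((m : ℕ) : ℤ) ≤ mcol lam i by omega),
      if_neg (show ¬((m : ℕ) : ℤ) < mcol lam i by omega)]
    simp

lemma sum_cnt (hdom : AlmostDominant w lam)
    (hlast : ∀ h : 0 < r, 0 ≤ lam ⟨r - 1, Nat.sub_lt h Nat.one_pos⟩)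
    (hN : ∀ h : 0 < r, lam ⟨0, h⟩ + (r : ℤ) - 1 ≤ (N : ℤ)) (i : Fin r) :
    ∑ m : Fin (N + 1), cnt N w lam i m =
      (Finset.univ.filter
        (fun j : Fin r => (i : ℕ) < (j : ℕ) ∧ gcol w i < gcol w j)).card := by
  have hbnd : ∀ j : Fin r, (mcol lam j).toNat < N + 1 := by
    intro j
    have h1 := mcol_nonneg w lam hdom hlast j
    have h2 := mcol_le_N N w lam hdom hN j
    omega
  symm
  rw [Finset.card_eq_sum_card_fiberwise
    (f := fun j : Fin r => (⟨(mcol lam j).toNat, hbnd j⟩ : Fin (N + 1)))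
    (t := (Finset.univ : Finset (Fin (N + 1)))) (fun x _ => Finset.mem_univ _)]
  apply Finset.sum_congr rfl
  intro m _
  rw [Finset.filter_filter]
  rw [cnt]
  congr 1
  apply Finset.filter_congr
  intro j _
  have h1 := mcol_nonneg w lam hdom hlast j
  constructor
  · rintro ⟨hp, hf⟩
    refine ⟨hp, ?_⟩
    have := congrArg Fin.val hf
    simp only at this
    omega
  · rintro ⟨hp, hf⟩
    refine ⟨hp, ?_⟩
    apply Fin.ext
    simp only
    omega

lemma card_cols_lt (K : ℤ) (h0 : 0 ≤ K) (hK : K ≤ (N : ℤ)) :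
    (Finset.univ.filter (fun m : Fin (N + 1) => ((m : ℕ) : ℤ) < K)).card = K.toNat := by
  rw [show K.toNat = (Finset.range K.toNat).card from (Finset.card_range _).symm]
  refine Finset.card_bij' (fun (m : Fin (N + 1)) _ => (m : ℕ))
    (fun k hk => (⟨k, by simp only [Finset.mem_range] at hk; omega⟩ : Fin (N + 1)))
    ?_ ?_ ?_ ?_
  · intro a ha
    simp only [Finset.mem_filter, Finset.mem_univ, true_and] at ha
    simp only [Finset.mem_range]
    omega
  · intro b hb
    simp only [Finset.mem_range] at hb
    simp only [Finset.mem_filter, Finset.mem_univ, true_and]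
    push_cast
    omega
  · intro a ha
    exact Fin.ext rfl
  · intro b hb
    rfl

lemma sum_inv : ∑ i : Fin r,
    (Finset.univ.filter
      (fun j : Fin r => (i : ℕ) < (j : ℕ) ∧ gcol w i < gcol w j)).card = invLen w := by
  classical
  have h1 : invLen w = (Finset.univ.filter
      (fun p : Fin r × Fin r =>
        (p.1 : ℕ) < (p.2 : ℕ) ∧ gcol w p.1 < gcol w p.2)).card := by
    rw [invLen]
    refine Finset.card_bij' (fun (q : Fin r × Fin r) _ => (w q.2, w q.1))
      (fun (p : Fin r × Fin r) _ => (w⁻¹ p.2, w⁻¹ p.1)) ?_ ?_ ?_ ?_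
    · intro q hq
      simp only [Finset.mem_filter, Finset.mem_univ, true_and] at hq ⊢
      obtain ⟨hq1, hq2⟩ := hq
      refine ⟨Fin.lt_def.mp hq2, ?_⟩
      have e1 : w⁻¹ (w q.1) = q.1 := Equiv.symm_apply_apply w q.1
      have e2 : w⁻¹ (w q.2) = q.2 := Equiv.symm_apply_apply w q.2
      simp only [gcol, e1, e2]
      have hb1 := q.1.isLt
      have hb2 := q.2.isLt
      have hq1' := Fin.lt_def.mp hq1
      omega
    · intro p hp
      simp only [Finset.mem_filter, Finset.mem_univ, true_and] at hp ⊢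
      obtain ⟨hp1, hp2⟩ := hp
      constructor
      · rw [Fin.lt_def]
        simp only [gcol] at hp2
        have hb1 := (w⁻¹ p.1).isLt
        have hb2 := (w⁻¹ p.2).isLt
        omega
      · rw [show w (w⁻¹ p.1) = p.1 from Equiv.apply_symm_apply w p.1,
          show w (w⁻¹ p.2) = p.2 from Equiv.apply_symm_apply w p.2]
        exact Fin.lt_def.mpr hp1
    · intro q hq
      simp
    · intro p hp
      simp
  rw [h1, Finset.card_eq_sum_card_fiberwise (f := Prod.fst)
    (t := (Finset.univ : Finset (Fin r))) (fun x _ => Finset.mem_univ _)]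
  apply Finset.sum_congr rfl
  intro i _
  symm
  refine Finset.card_bij' (fun (p : Fin r × Fin r) _ => p.2)
    (fun (j : Fin r) _ => ((i, j) : Fin r × Fin r)) ?_ ?_ ?_ ?_
  · intro p hp
    simp only [Finset.mem_filter, Finset.mem_univ, true_and] at hp ⊢
    obtain ⟨hp1, hp2⟩ := hp
    rw [← hp2]
    exact hp1
  · intro j hj
    simp only [Finset.mem_filter, Finset.mem_univ, true_and] at hj ⊢
    exact ⟨hj, trivial⟩
  · intro p hp
    simp only [Finset.mem_filter, Finset.mem_univ, true_and] at hp
    exact Prod.ext hp.2.symm rfl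
  · intro j hj
    rfl

lemma boltz_gS (hdom : AlmostDominant w lam)
    (hlast : ∀ h : 0 < r, 0 ≤ lam ⟨r - 1, Nat.sub_lt h Nat.one_pos⟩)
    (hN : ∀ h : 0 < r, lam ⟨0, h⟩ + (r : ℤ) - 1 ≤ (N : ℤ))
    (v : ℂ) (z : Fin r → ℂ) :
    boltz r N v z (gS N w lam) =
      v ^ invLen w * ∏ i : Fin r, z i ^ (lam i + ((Fin.rev i : ℕ) : ℤ)) := by
  rw [boltz]
  have hrow : ∀ i : Fin r, ∏ m : Fin (N + 1),
      fusedWt v (z i) ((gS N w lam).1 i m.succ) ((gS N w lam).2 m i.castSucc)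
        ((gS N w lam).1 i m.castSucc) ((gS N w lam).2 m i.succ) =
      v ^ (Finset.univ.filter
        (fun j : Fin r => (i : ℕ) < (j : ℕ) ∧ gcol w i < gcol w j)).card *
        z i ^ (mcol lam i).toNat := by
    intro i
    rw [Finset.prod_congr rfl (fun m _ => wt_factor N w lam hdom hlast hN v (z i) i m),
      Finset.prod_mul_distrib]
    congr 1
    · have h1 : ∀ m : Fin (N + 1),
          (if ((m : ℕ) : ℤ) ≤ mcol lam i then v ^ cnt N w lam i m else 1) =
            v ^ cnt N w lam i m := by
        intro m
        split
        · rfl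
        · rw [cnt_zero_of_gt N w lam hdom i m (by omega), pow_zero]
      rw [Finset.prod_congr rfl (fun m _ => h1 m), Finset.prod_pow_eq_pow_sum,
        sum_cnt N w lam hdom hlast hN i]
    · rw [← Finset.prod_filter, Finset.prod_const,
        card_cols_lt N (mcol lam i) (mcol_nonneg w lam hdom hlast i)
          (mcol_le_N N w lam hdom hN i)]
  rw [Finset.prod_congr rfl (fun i _ => hrow i), Finset.prod_mul_distrib,
    Finset.prod_pow_eq_pow_sum, sum_inv w]
  congr 1
  apply Finset.prod_congr rfl
  intro i _
  rw [← zpow_natCast, Int.toNat_of_nonneg (mcol_nonneg w lam hdom hlast i)]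
  rfl

end IwGS

/-- Uniqueness and evaluation of the ground state: if `λ ∈ ℤ^r` is
`w`-almost dominant with `λ_r ≥ 0`, then the Iwahori system `𝔖_{z,λ,w,w}` has
exactly one admissible state, and its partition function equals
`v^{ℓ(w)} · ∏_{i=1}^{r} z_i^{λ_i + r − i}`. -/
theorem iwahori_ground_state
    (r N : ℕ) (w : Equiv.Perm (Fin r)) (lam : Fin r → ℤ)
    (hdom : AlmostDominant w lam)
    (hlam_last : ∀ h : 0 < r, 0 ≤ lam ⟨r - 1, by omega⟩)
    (hN : ∀ h : 0 < r, lam ⟨0, h⟩ + (r : ℤ) - 1 ≤ (N : ℤ))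
    (v : ℂ) (z : Fin r → ℂ) :
    (∃! s : GState r N,
        ValidState r N (flagTop r N (stdFlag r) lam w) (flagRight r (stdFlag r) w) s) ∧
    ZIw r N v z lam w w =
      v ^ invLen w * ∏ i : Fin r, z i ^ (lam i + ((Fin.rev i : ℕ) : ℤ)) := by
  constructor
  · exact ⟨IwGS.gS N w lam, IwGS.gS_valid N w lam hdom hlam_last hN,
      fun s hs => IwGS.uniq N w lam hdom hlam_last hN s hs⟩
  · have huniq : ∀ x : GState r N, x ≠ IwGS.gS N w lam →
        (if ValidState r N (flagTop r N (stdFlag r) lam w) (flagRight r (stdFlag r) w) x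
          then boltz r N v z x else 0) = 0 := by
      intro x hx
      rw [if_neg]
      intro hval
      exact hx (IwGS.uniq N w lam hdom hlam_last hN x hval)
    rw [ZIw, Zflag, Zsys, finsum_eq_single _ _ huniq,
      if_pos (IwGS.gS_valid N w lam hdom hlam_last hN)]
    exact IwGS.boltz_gS N w lam hdom hlam_last hN v z
end
end

section
/- Let (W,S) be a Coxeter system, J a subset of the index set of the simple reflections, W_J the subgroup generated by {s_j : j ∈ J}, and W^J = {w ∈ W : ℓ(w s_j) > ℓ(w) for all j ∈ J}. If w ∈ W^J and s_i is a simple reflection such that w⁻¹ s_i w ∉ W_J, then s_i w ∈ W^J. -/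
namespace CoxeterAuxExchange

open List

noncomputable section

variable {B : Type*} {W : Type*} [Group W] {M : CoxeterMatrix B} (cs : CoxeterSystem M W)

local instance (priority := high) : DecidableEq W := Classical.decEq W

lemma simple_conj_eq_iff (i : B) (t x : W) :
    cs.simple i * t * cs.simple i = x ↔ t = cs.simple i * x * cs.simple i := by
  constructor
  · rintro rfl
    simp [← mul_assoc, cs.simple_mul_simple_self, cs.simple_mul_simple_cancel_right]
  · rintro rfl
    simp [← mul_assoc, cs.simple_mul_simple_self, cs.simple_mul_simple_cancel_right]

lemma conj_eq_iff (w x y : W) : w * x * w⁻¹ = y ↔ x = w⁻¹ * y * w := by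
  constructor
  · rintro rfl; group
  · rintro rfl; group

/-- The Bourbaki sign permutation associated to a simple reflection. -/
def sgnPerm (i : B) : Equiv.Perm (W × ℤˣ) :=
  Function.Involutive.toPerm
    (fun p => (cs.simple i * p.1 * cs.simple i, p.2 * (if p.1 = cs.simple i then -1 else 1)))
    (by
      rintro ⟨t, ε⟩
      have hconj : cs.simple i * (cs.simple i * t * cs.simple i) * cs.simple i = t := by
        simp [← mul_assoc, cs.simple_mul_simple_self, cs.simple_mul_simple_cancel_right]
      have hiff : cs.simple i * t * cs.simple i = cs.simple i ↔ t = cs.simple i := by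
        rw [simple_conj_eq_iff]
        simp [cs.simple_mul_simple_cancel_left]
      by_cases h : t = cs.simple i
      · simp [Prod.ext_iff, hconj, hiff, h]
      · simp [Prod.ext_iff, hconj, hiff, h])

@[simp] lemma sgnPerm_apply (i : B) (p : W × ℤˣ) :
    sgnPerm cs i p =
      (cs.simple i * p.1 * cs.simple i, p.2 * (if p.1 = cs.simple i then -1 else 1)) := rfl

lemma sgnPerm_mul_pow_apply (i i' : B) (n : ℕ) (t : W) (ε : ℤˣ) :
    ((sgnPerm cs i * sgnPerm cs i') ^ n) (t, ε) =
      ((cs.simple i * cs.simple i') ^ n * t * (((cs.simple i * cs.simple i') ^ n)⁻¹),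
        ε * ∏ k ∈ Finset.range (2 * n),
          (if t = ((cs.simple i * cs.simple i')⁻¹) ^ k * cs.simple i' then (-1 : ℤˣ) else 1)) := by
  induction n generalizing t ε with
  | zero => simp
  | succ n ih =>
    set q : W := cs.simple i * cs.simple i' with hq
    have hqu : cs.simple i' * q = q⁻¹ * cs.simple i' := by
      rw [hq, mul_inv_rev, cs.inv_simple, cs.inv_simple, ← mul_assoc]
    have hshift : ∀ k : ℕ, q⁻¹ * ((q⁻¹) ^ k * cs.simple i') * q = (q⁻¹) ^ (k + 2) * cs.simple i' := by
      intro k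
      calc q⁻¹ * ((q⁻¹) ^ k * cs.simple i') * q
          = (q⁻¹) ^ (k + 1) * (cs.simple i' * q) := by rw [pow_succ']; group
        _ = (q⁻¹) ^ (k + 1) * (q⁻¹ * cs.simple i') := by rw [hqu]
        _ = (q⁻¹) ^ (k + 2) * cs.simple i' := by rw [pow_succ' _ (k + 1)]; group
    have key : ∀ k : ℕ,
        (q * t * q⁻¹ = (q⁻¹) ^ k * cs.simple i') ↔ (t = (q⁻¹) ^ (k + 2) * cs.simple i') := by
      intro k
      rw [conj_eq_iff, hshift k]
    have hmain : cs.simple i * (cs.simple i' * t * cs.simple i') * cs.simple i = q * t * q⁻¹ := by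
      rw [hq, mul_inv_rev, cs.inv_simple, cs.inv_simple]; group
    rw [pow_succ, Equiv.Perm.mul_apply, Equiv.Perm.mul_apply, sgnPerm_apply, sgnPerm_apply]
    dsimp only
    rw [ih, hmain]
    refine Prod.ext ?_ ?_
    · show q ^ n * (q * t * q⁻¹) * (q ^ n)⁻¹ = q ^ (n + 1) * t * (q ^ (n + 1))⁻¹
      rw [pow_succ]; group
    · show ε * (if t = cs.simple i' then (-1 : ℤˣ) else 1)
          * (if cs.simple i' * t * cs.simple i' = cs.simple i then (-1 : ℤˣ) else 1)
          * ∏ k ∈ Finset.range (2 * n),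
            (if q * t * q⁻¹ = (q⁻¹) ^ k * cs.simple i' then (-1 : ℤˣ) else 1)
        = ε * ∏ k ∈ Finset.range (2 * (n + 1)),
            (if t = (q⁻¹) ^ k * cs.simple i' then (-1 : ℤˣ) else 1)
      have h0 : (if t = cs.simple i' then (-1 : ℤˣ) else 1)
          = (if t = (q⁻¹) ^ 0 * cs.simple i' then (-1 : ℤˣ) else 1) := by
        rw [pow_zero, one_mul]
      have h1 : (if cs.simple i' * t * cs.simple i' = cs.simple i then (-1 : ℤˣ) else 1)
          = (if t = (q⁻¹) ^ 1 * cs.simple i' then (-1 : ℤˣ) else 1) := by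
        refine if_congr ?_ rfl rfl
        rw [simple_conj_eq_iff, pow_one, hq, mul_inv_rev, cs.inv_simple, cs.inv_simple]
      have h2 : ∏ k ∈ Finset.range (2 * n),
            (if q * t * q⁻¹ = (q⁻¹) ^ k * cs.simple i' then (-1 : ℤˣ) else 1)
          = ∏ k ∈ Finset.range (2 * n),
            (if t = (q⁻¹) ^ (2 + k) * cs.simple i' then (-1 : ℤˣ) else 1) := by
        refine Finset.prod_congr rfl fun k _ => ?_
        refine if_congr ?_ rfl rfl
        rw [key k, Nat.add_comm 2 k]
      rw [h0, h1, h2, show 2 * (n + 1) = 2 + 2 * n from by ring, Finset.prod_range_add]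
      rw [Finset.prod_range_succ, Finset.prod_range_one]
      simp only [mul_assoc]

lemma sgnPerm_liftable : M.IsLiftable (sgnPerm cs) := by
  intro i i'
  have hq1 : (cs.simple i * cs.simple i') ^ M i i' = 1 := cs.simple_mul_simple_pow i i'
  have hqi : ((cs.simple i * cs.simple i')⁻¹) ^ M i i' = 1 := by
    rw [inv_pow, hq1, inv_one]
  apply Equiv.ext
  rintro ⟨t, ε⟩
  rw [sgnPerm_mul_pow_apply, Equiv.Perm.one_apply]
  refine Prod.ext ?_ ?_
  · show (cs.simple i * cs.simple i') ^ M i i' * t * ((cs.simple i * cs.simple i') ^ M i i')⁻¹ = t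
    rw [hq1]; group
  · show ε * ∏ k ∈ Finset.range (2 * M i i'),
        (if t = ((cs.simple i * cs.simple i')⁻¹) ^ k * cs.simple i' then (-1 : ℤˣ) else 1) = ε
    rw [show 2 * M i i' = M i i' + M i i' from by ring, Finset.prod_range_add]
    have : ∏ k ∈ Finset.range (M i i'),
        (if t = ((cs.simple i * cs.simple i')⁻¹) ^ (M i i' + k) * cs.simple i'
          then (-1 : ℤˣ) else 1)
        = ∏ k ∈ Finset.range (M i i'),
        (if t = ((cs.simple i * cs.simple i')⁻¹) ^ k * cs.simple i' then (-1 : ℤˣ) else 1) := by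
      refine Finset.prod_congr rfl fun k _ => ?_
      rw [pow_add, hqi, one_mul]
    rw [this, Int.units_mul_self, mul_one]

/-- The sign representation of the Coxeter group on `W × ℤˣ`. -/
noncomputable def sgnRep : W →* Equiv.Perm (W × ℤˣ) :=
  cs.lift ⟨sgnPerm cs, sgnPerm_liftable cs⟩

lemma sgnRep_simple (i : B) : sgnRep cs (cs.simple i) = sgnPerm cs i :=
  cs.lift_apply_simple (sgnPerm_liftable cs) i

lemma sgnRep_wordProd_apply (ω : List B) (t : W) (ε : ℤˣ) :
    sgnRep cs (cs.wordProd ω) (t, ε) =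
      (cs.wordProd ω * t * (cs.wordProd ω)⁻¹,
        ε * ∏ k ∈ Finset.range ω.length,
          (if t = (cs.rightInvSeq ω).getD k 1 then (-1 : ℤˣ) else 1)) := by
  induction ω generalizing t ε with
  | nil => simp
  | cons i ω ih =>
    have hris : cs.rightInvSeq (i :: ω)
        = ((cs.wordProd ω)⁻¹ * cs.simple i * cs.wordProd ω) :: cs.rightInvSeq ω := rfl
    have h0 : (if cs.wordProd ω * t * (cs.wordProd ω)⁻¹ = cs.simple i then (-1 : ℤˣ) else 1)
        = (if t = (((cs.wordProd ω)⁻¹ * cs.simple i * cs.wordProd ω) :: cs.rightInvSeq ω).getD 0 1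
            then (-1 : ℤˣ) else 1) := by
      refine if_congr ?_ rfl rfl
      rw [List.getD_cons_zero, conj_eq_iff, mul_assoc]
    have h1 : ∏ k ∈ Finset.range ω.length,
          (if t = (((cs.wordProd ω)⁻¹ * cs.simple i * cs.wordProd ω) :: cs.rightInvSeq ω).getD (k + 1) 1
            then (-1 : ℤˣ) else 1)
        = ∏ k ∈ Finset.range ω.length,
          (if t = (cs.rightInvSeq ω).getD k 1 then (-1 : ℤˣ) else 1) := by
      refine Finset.prod_congr rfl fun k _ => ?_
      rw [List.getD_cons_succ]
    rw [cs.wordProd_cons, map_mul, Equiv.Perm.mul_apply, ih, sgnRep_simple, sgnPerm_apply, hris]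
    refine Prod.ext ?_ ?_
    · dsimp only
      rw [mul_inv_rev, cs.inv_simple]; group
    · dsimp only
      rw [List.length_cons, Finset.prod_range_succ', h1, ← h0]
      exact mul_assoc ε _ _

/-- The (left) exchange property. -/
lemma exists_eraseIdx_of_length_simple_mul_lt (ω : List B) (i : B)
    (h : cs.length (cs.simple i * cs.wordProd ω) < cs.length (cs.wordProd ω)) :
    ∃ k < ω.length, cs.simple i * cs.wordProd ω = cs.wordProd (ω.eraseIdx k) := by
  set w := cs.wordProd ω with hwdef
  set v := cs.simple i * w with hv
  obtain ⟨ψ, hψred, hψ⟩ := cs.exists_reduced_word' v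
  have hprod : cs.wordProd (i :: ψ) = w := by
    rw [cs.wordProd_cons, ← hψ, hv, cs.simple_mul_simple_cancel_left]
  set t := v⁻¹ * cs.simple i * v with ht
  have h1 : sgnRep cs w (t, 1) = sgnRep cs (cs.wordProd (i :: ψ)) (t, 1) := by rw [hprod]
  nth_rewrite 1 [hwdef] at h1
  rw [sgnRep_wordProd_apply, sgnRep_wordProd_apply] at h1
  have h2 := congrArg Prod.snd h1
  dsimp only at h2
  -- compute the right-hand sign: it is -1
  have hrisψ : cs.rightInvSeq (i :: ψ)
      = ((cs.wordProd ψ)⁻¹ * cs.simple i * cs.wordProd ψ) :: cs.rightInvSeq ψ := rfl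
  have hsign : ∏ k ∈ Finset.range (i :: ψ).length,
      (if t = (cs.rightInvSeq (i :: ψ)).getD k 1 then (-1 : ℤˣ) else 1) = -1 := by
    rw [hrisψ, List.length_cons, Finset.prod_range_succ']
    have h0 : (if t = (((cs.wordProd ψ)⁻¹ * cs.simple i * cs.wordProd ψ) :: cs.rightInvSeq ψ).getD 0 1
        then (-1 : ℤˣ) else 1) = -1 := by
      rw [List.getD_cons_zero, if_pos]
      rw [ht, ← hψ]
    have h1' : ∏ k ∈ Finset.range ψ.length,
        (if t = (((cs.wordProd ψ)⁻¹ * cs.simple i * cs.wordProd ψ) :: cs.rightInvSeq ψ).getD (k + 1) 1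
          then (-1 : ℤˣ) else 1) = 1 := by
      refine Finset.prod_eq_one fun k hk => ?_
      rw [List.getD_cons_succ]
      refine if_neg fun htk => ?_
      have hk' : k < (cs.rightInvSeq ψ).length := by
        rw [cs.length_rightInvSeq]; exact Finset.mem_range.mp hk
      have hmem : (cs.rightInvSeq ψ).getD k 1 ∈ cs.rightInvSeq ψ := by
        rw [List.getD_eq_getElem _ _ hk']
        exact List.getElem_mem hk'
      have hinv := cs.isRightInversion_of_mem_rightInvSeq hψred hmem
      have hvx : v * (cs.rightInvSeq ψ).getD k 1 = w := by
        rw [← htk, ht, hv]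
        simp [← mul_assoc, cs.simple_mul_simple_cancel_right, mul_inv_rev, cs.inv_simple]
      have hlt := hinv.2
      rw [← hψ, hvx] at hlt
      -- hlt : ℓ w < ℓ v, but h : ℓ v < ℓ w
      exact lt_irrefl _ (hlt.trans h)
    rw [h0, h1', one_mul]
  rw [hsign, one_mul, one_mul] at h2
  have hωsign : ∏ k ∈ Finset.range ω.length,
      (if t = (cs.rightInvSeq ω).getD k 1 then (-1 : ℤˣ) else 1) = -1 := h2
  have hex : ∃ k < ω.length, t = (cs.rightInvSeq ω).getD k 1 := by
    by_contra hcon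
    push_neg at hcon
    have : ∏ k ∈ Finset.range ω.length,
        (if t = (cs.rightInvSeq ω).getD k 1 then (-1 : ℤˣ) else 1) = 1 :=
      Finset.prod_eq_one fun k hk => if_neg (hcon k (Finset.mem_range.mp hk))
    rw [this] at hωsign
    refine absurd hωsign fun hcon => ?_
    exact absurd (congrArg Units.val hcon) (by norm_num)
  obtain ⟨k, hk, htk⟩ := hex
  refine ⟨k, hk, ?_⟩
  have herase := cs.wordProd_mul_getD_rightInvSeq ω k
  rw [← htk] at herase
  rw [← herase, ← hwdef, ht, hv]
  simp [← mul_assoc, cs.simple_mul_simple_cancel_right, mul_inv_rev, cs.inv_simple]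

end

end CoxeterAuxExchange

/-- Let `(W,S)` be a Coxeter system, `J` a subset of the index set of the
simple reflections, `W_J` the subgroup generated by the simple reflections indexed by `J`,
and `W^J = {w : ℓ(w s_j) > ℓ(w) for all j ∈ J}`.  If `w ∈ W^J` and `s_i` is a simple
reflection such that `w⁻¹ s_i w ∉ W_J`, then `s_i w ∈ W^J`. -/
theorem simple_mul_mem_minimal_coset_reps
    {B : Type*} {W : Type*} [Group W] {M : CoxeterMatrix B}
    (cs : CoxeterSystem M W) (J : Set B) (w : W)
    (hw : ∀ j ∈ J, cs.length (w * cs.simple j) > cs.length w)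
    (i : B)
    (hi : w⁻¹ * cs.simple i * w ∉ Subgroup.closure (cs.simple '' J)) :
    ∀ j ∈ J, cs.length (cs.simple i * w * cs.simple j) > cs.length (cs.simple i * w) := by
  intro j hj
  by_contra hlt
  -- length bookkeeping
  have h1 := cs.length_simple_mul w i
  have h2 := cs.length_simple_mul_ne w i
  have h3 := cs.length_mul_simple w j
  have h4 := cs.length_mul_simple (cs.simple i * w) j
  have h5 := cs.length_mul_simple_ne (cs.simple i * w) j
  have h6 : cs.length (cs.simple i * (w * cs.simple j)) = cs.length (cs.simple i * w * cs.simple j) := by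
    rw [mul_assoc]
  have h7 := cs.length_simple_mul (w * cs.simple j) i
  have h8 := hw j hj
  rw [h6] at h7
  have hb : cs.length (cs.simple i * w) = cs.length w + 1 := by omega
  have hd : cs.length (cs.simple i * w * cs.simple j) = cs.length w := by omega
  have hc : cs.length (w * cs.simple j) = cs.length w + 1 := by omega
  -- exchange property applied to a reduced word for `w` concatenated with `j`
  obtain ⟨ω, hlen, hω⟩ := cs.exists_reduced_word w
  have hπ' : cs.wordProd (ω ++ [j]) = w * cs.simple j := by
    rw [cs.wordProd_append, ← hω]
    congr 1
    simp [cs.wordProd_cons]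
  have hlt' : cs.length (cs.simple i * cs.wordProd (ω ++ [j])) < cs.length (cs.wordProd (ω ++ [j])) := by
    rw [hπ', ← mul_assoc, hd, hc]
    omega
  obtain ⟨k, hk, heq⟩ := CoxeterAuxExchange.exists_eraseIdx_of_length_simple_mul_lt cs (ω ++ [j]) i hlt'
  rw [hπ'] at heq
  rw [List.length_append, List.length_singleton] at hk
  by_cases hcase : k < ω.length
  · rw [List.eraseIdx_append_of_lt_length hcase] at heq
    have hsw : cs.simple i * w = cs.wordProd (ω.eraseIdx k) := by
      have := congrArg (· * cs.simple j) heq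
      rw [← mul_assoc, cs.simple_mul_simple_cancel_right, cs.wordProd_append] at this
      rw [this]
      simp [cs.wordProd_cons, cs.simple_mul_simple_cancel_right]
    have hle := cs.length_wordProd_le (ω.eraseIdx k)
    have hlen' := List.length_eraseIdx_add_one hcase
    rw [← hsw] at hle
    have hlenω := hlen.eq
    rw [← hω] at hlenω
    omega
  · have hkeq : k = ω.length := by omega
    rw [List.eraseIdx_append_of_length_le (by omega) _] at heq
    rw [hkeq, Nat.sub_self] at heq
    simp only [List.eraseIdx_cons_zero, List.append_nil] at heq
    rw [← hω] at heq
    -- heq : s i * (w * s j) = w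
    have h' : cs.simple i * w = w * cs.simple j := by
      have := congrArg (· * cs.simple j) heq
      rw [← mul_assoc, cs.simple_mul_simple_cancel_right] at this
      exact this
    have hmem : w⁻¹ * cs.simple i * w = cs.simple j := by
      rw [mul_assoc, h', inv_mul_cancel_left]
    exact hi (hmem ▸ Subgroup.subset_closure ⟨j, hj, rfl⟩)
end

section
/- Let (W,S) be a Coxeter system, J a subset of the index set of the simple reflections, W_J the subgroup generated by {s_j : j ∈ J}, and W^J = {w ∈ W : ℓ(w s_j) > ℓ(w) for all j ∈ J}. If w ∈ W^J and s_i is a simple reflection such that w⁻¹ s_i w ∉ W_J and ℓ(s_i w) > ℓ(w), then ℓ(s_i w y) > ℓ(w y) for every y ∈ W_J. -/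
open List

namespace StrongExchangeAux

open CoxeterSystem

open scoped Classical

variable {B : Type*} {W : Type*} [Group W] {M : CoxeterMatrix B} (cs : CoxeterSystem M W)

private lemma unit_mul_self (u : ℤˣ) : u * u = 1 := by
  rcases Int.units_eq_one_or u with rfl | rfl <;> decide

private lemma conj_iff (g u v : W) : g * u * g⁻¹ = v ↔ u = g⁻¹ * v * g := by
  constructor
  · rintro rfl; group
  · rintro rfl; group

private lemma sandwich (a : B) (x : W) :
    cs.simple a * (cs.simple a * x * cs.simple a) * cs.simple a = x := by
  have h := cs.simple_mul_simple_self a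
  calc cs.simple a * (cs.simple a * x * cs.simple a) * cs.simple a
      = (cs.simple a * cs.simple a) * x * (cs.simple a * cs.simple a) := by group
    _ = x := by rw [h]; group

private lemma conj_simple_eq_simple_iff (a b : B) (x : W) :
    cs.simple a * x * cs.simple a = cs.simple b ↔
      x = cs.simple a * cs.simple b * cs.simple a := by
  constructor
  · intro h
    have h' := congrArg (fun z => cs.simple a * z * cs.simple a) h
    rw [sandwich] at h'
    exact h'
  · rintro rfl
    exact sandwich cs a _

/-- The function underlying the Bjorner–Brenti permutation representation on `W × ℤˣ`. -/
private noncomputable def fmap (i : B) : W × ℤˣ → W × ℤˣ :=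
  fun p => (cs.simple i * p.1 * cs.simple i, if p.1 = cs.simple i then -p.2 else p.2)

private lemma fmap_involutive (i : B) : Function.Involutive (fmap cs i) := by
  rintro ⟨w, ε⟩
  simp only [fmap]
  have h2 : (cs.simple i * w * cs.simple i = cs.simple i) ↔ (w = cs.simple i) := by
    rw [conj_simple_eq_simple_iff]
    rw [cs.simple_mul_simple_self, one_mul]
  by_cases h : w = cs.simple i
  · simp [h, h2, sandwich]
  · simp [h, h2, sandwich]

private noncomputable def fperm (i : B) : Equiv.Perm (W × ℤˣ) :=
  (fmap_involutive cs i).toPerm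

private lemma fperm_apply (i : B) (p : W × ℤˣ) : fperm cs i p = fmap cs i p := rfl

private lemma key_eq (i i' : B) (k : ℕ) :
    (cs.simple i * cs.simple i')⁻¹ *
        (cs.simple i' * (cs.simple i * cs.simple i') ^ k) * (cs.simple i * cs.simple i')
      = cs.simple i' * (cs.simple i * cs.simple i') ^ (k + 1 + 1) := by
  have e1 : (cs.simple i * cs.simple i')⁻¹ * cs.simple i'
      = cs.simple i' * (cs.simple i * cs.simple i') := by
    rw [mul_inv_rev, cs.inv_simple, cs.inv_simple]
    group
  have hstep : (cs.simple i * cs.simple i')⁻¹ *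
        (cs.simple i' * (cs.simple i * cs.simple i') ^ k) * (cs.simple i * cs.simple i')
      = ((cs.simple i * cs.simple i')⁻¹ * cs.simple i') *
          ((cs.simple i * cs.simple i') ^ k * (cs.simple i * cs.simple i')) := by
    simp only [mul_assoc]
  rw [hstep, e1, ← pow_succ, mul_assoc, ← pow_succ']

private lemma fperm_pow (i i' : B) (m : ℕ) (w : W) (ε : ℤˣ) :
    ((fperm cs i * fperm cs i') ^ m) (w, ε) =
      ((cs.simple i * cs.simple i') ^ m * w * ((cs.simple i * cs.simple i') ^ m)⁻¹,
        (∏ k ∈ Finset.range (2 * m),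
          if w = cs.simple i' * (cs.simple i * cs.simple i') ^ k then (-1 : ℤˣ) else 1) * ε) := by
  induction m generalizing w ε with
  | zero => simp
  | succ m ih =>
    rw [pow_succ, Equiv.Perm.mul_apply]
    have hg : (fperm cs i * fperm cs i') (w, ε) =
        ((cs.simple i * cs.simple i') * w * (cs.simple i * cs.simple i')⁻¹,
         (if w = cs.simple i' * (cs.simple i * cs.simple i') ^ (0 + 1) then (-1 : ℤˣ) else 1) *
           ((if w = cs.simple i' * (cs.simple i * cs.simple i') ^ 0 then (-1 : ℤˣ) else 1) * ε)) := by
      rw [Equiv.Perm.mul_apply, fperm_apply, fperm_apply]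
      simp only [fmap]
      have hc1 : (cs.simple i' * w * cs.simple i' = cs.simple i) ↔
          (w = cs.simple i' * (cs.simple i * cs.simple i') ^ (0 + 1)) := by
        rw [conj_simple_eq_simple_iff, zero_add, pow_one, mul_assoc]
      have hc0 : (w = cs.simple i') ↔
          (w = cs.simple i' * (cs.simple i * cs.simple i') ^ 0) := by
        rw [pow_zero, mul_one]
      have hfirst : cs.simple i * (cs.simple i' * w * cs.simple i') * cs.simple i
          = (cs.simple i * cs.simple i') * w * (cs.simple i * cs.simple i')⁻¹ := by
        rw [mul_inv_rev, cs.inv_simple, cs.inv_simple]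
        group
      rw [Prod.mk.injEq]
      refine ⟨hfirst, ?_⟩
      by_cases h1 : cs.simple i' * w * cs.simple i' = cs.simple i <;>
        by_cases h0 : w = cs.simple i'
      · rw [if_pos h1, if_pos h0, if_pos (hc1.mp h1), if_pos (hc0.mp h0)]; simp
      · rw [if_pos h1, if_neg h0, if_pos (hc1.mp h1),
          if_neg (fun hh => h0 (hc0.mpr hh))]; simp
      · rw [if_neg h1, if_pos h0, if_neg (fun hh => h1 (hc1.mpr hh)), if_pos (hc0.mp h0)]; simp
      · rw [if_neg h1, if_neg h0, if_neg (fun hh => h1 (hc1.mpr hh)),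
          if_neg (fun hh => h0 (hc0.mpr hh))]; simp
    rw [hg, ih]
    rw [Prod.mk.injEq]
    constructor
    · rw [pow_succ]
      group
    · have hcond : ∀ k : ℕ,
          ((cs.simple i * cs.simple i') * w * (cs.simple i * cs.simple i')⁻¹ =
              cs.simple i' * (cs.simple i * cs.simple i') ^ k) ↔
            (w = cs.simple i' * (cs.simple i * cs.simple i') ^ (k + 1 + 1)) := by
        intro k
        rw [conj_iff, key_eq]
      have hprodeq : (∏ k ∈ Finset.range (2 * m),
            if (cs.simple i * cs.simple i') * w * (cs.simple i * cs.simple i')⁻¹ =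
                cs.simple i' * (cs.simple i * cs.simple i') ^ k then (-1 : ℤˣ) else 1)
          = ∏ k ∈ Finset.range (2 * m),
            if w = cs.simple i' * (cs.simple i * cs.simple i') ^ (k + 1 + 1)
              then (-1 : ℤˣ) else 1 :=
        Finset.prod_congr rfl (fun k _ => if_congr (hcond k) rfl rfl)
      rw [hprodeq]
      have h2m : 2 * (m + 1) = (2 * m + 1) + 1 := by ring
      rw [h2m, Finset.prod_range_succ', Finset.prod_range_succ']
      simp only [mul_assoc]

private lemma fperm_liftable : M.IsLiftable (fun i => fperm cs i) := by
  intro i i'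
  apply Equiv.ext
  rintro ⟨w, ε⟩
  have hp : (cs.simple i * cs.simple i') ^ M i i' = 1 := cs.simple_mul_simple_pow i i'
  rw [show ((fun i => fperm cs i) i * (fun i => fperm cs i) i') = fperm cs i * fperm cs i' from rfl]
  rw [fperm_pow, Equiv.Perm.one_apply]
  have heven : (∏ k ∈ Finset.range (2 * M i i'),
      if w = cs.simple i' * (cs.simple i * cs.simple i') ^ k then (-1 : ℤˣ) else 1) = 1 := by
    rw [two_mul, Finset.prod_range_add]
    have h2 : (∏ k ∈ Finset.range (M i i'),
        if w = cs.simple i' * (cs.simple i * cs.simple i') ^ (M i i' + k)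
          then (-1 : ℤˣ) else 1)
        = ∏ k ∈ Finset.range (M i i'),
            if w = cs.simple i' * (cs.simple i * cs.simple i') ^ k then (-1 : ℤˣ) else 1 :=
      Finset.prod_congr rfl (fun k _ => by rw [pow_add, hp, one_mul])
    rw [h2]
    exact unit_mul_self _
  rw [Prod.mk.injEq]
  constructor
  · rw [hp]; group
  · rw [heven, one_mul]

private noncomputable def phi : W →* Equiv.Perm (W × ℤˣ) :=
  cs.lift ⟨fun i => fperm cs i, fperm_liftable cs⟩

private lemma phi_simple (i : B) : phi cs (cs.simple i) = fperm cs i :=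
  cs.lift_apply_simple (fperm_liftable cs) i

/-- Product of signs attached to occurrences of `w` in `l`. -/
private noncomputable def signProd (l : List W) (w : W) : ℤˣ :=
  (l.map (fun t => if t = w then (-1 : ℤˣ) else 1)).prod

private lemma signProd_nil (w : W) : signProd ([] : List W) w = 1 := rfl

private lemma signProd_cons (t : W) (l : List W) (w : W) :
    signProd (t :: l) w = (if t = w then (-1 : ℤˣ) else 1) * signProd l w := by
  simp [signProd]

private lemma signProd_of_not_mem {l : List W} {w : W} (h : w ∉ l) : signProd l w = 1 := by
  induction l with
  | nil => rfl
  | cons a l ih =>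
    have ha : a ≠ w := by rintro rfl; exact h List.mem_cons_self
    rw [signProd_cons, if_neg ha, one_mul]
    exact ih (fun hw => h (List.mem_cons_of_mem a hw))

private lemma signProd_of_nodup_mem {l : List W} {w : W} (hn : l.Nodup) (hm : w ∈ l) :
    signProd l w = -1 := by
  induction l with
  | nil => cases hm
  | cons a l ih =>
    rcases List.mem_cons.mp hm with rfl | hw
    · rw [signProd_cons, if_pos rfl, signProd_of_not_mem (List.nodup_cons.mp hn).1]
      simp
    · have ha : a ≠ w := by
        intro e
        exact (List.nodup_cons.mp hn).1 (by rw [e]; exact hw)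
      rw [signProd_cons, if_neg ha, one_mul]
      exact ih (List.nodup_cons.mp hn).2 hw

private lemma phi_wordProd (ω : List B) (w : W) (ε : ℤˣ) :
    phi cs (cs.wordProd ω) (w, ε) =
      (cs.wordProd ω * w * (cs.wordProd ω)⁻¹, signProd (cs.rightInvSeq ω) w * ε) := by
  induction ω with
  | nil => simp [cs.wordProd_nil, signProd_nil]
  | cons a ω ih =>
    rw [cs.wordProd_cons, map_mul, Equiv.Perm.mul_apply, ih, phi_simple, fperm_apply]
    simp only [fmap]
    rw [Prod.mk.injEq]
    constructor
    · rw [mul_inv_rev, cs.inv_simple]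
      group
    · have hris : cs.rightInvSeq (a :: ω) =
          ((cs.wordProd ω)⁻¹ * cs.simple a * cs.wordProd ω) :: cs.rightInvSeq ω := rfl
      rw [hris, signProd_cons]
      have hc : (cs.wordProd ω * w * (cs.wordProd ω)⁻¹ = cs.simple a) ↔
          ((cs.wordProd ω)⁻¹ * cs.simple a * cs.wordProd ω = w) := by
        rw [conj_iff]
        exact eq_comm
      by_cases h : cs.wordProd ω * w * (cs.wordProd ω)⁻¹ = cs.simple a
      · rw [if_pos h, if_pos (hc.mp h)]
        simp [mul_assoc]
      · rw [if_neg h, if_neg (fun hh => h (hc.mpr hh)), one_mul]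

private lemma signProd_ris_eq {ω ω' : List B} (h : cs.wordProd ω = cs.wordProd ω') (w : W) :
    signProd (cs.rightInvSeq ω) w = signProd (cs.rightInvSeq ω') w := by
  have h1 := phi_wordProd cs ω w 1
  have h2 := phi_wordProd cs ω' w 1
  rw [h] at h1
  rw [h1] at h2
  have := congrArg Prod.snd h2
  simpa using this

private lemma simple_mem_rightInvSeq {ω : List B} (hred : cs.IsReduced ω) {j : B}
    (h : cs.length (cs.wordProd ω * cs.simple j) < cs.length (cs.wordProd ω)) :
    cs.simple j ∈ cs.rightInvSeq ω := by
  obtain ⟨τ, hτlen, hτprod⟩ := cs.exists_reduced_word (cs.wordProd ω * cs.simple j)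
  rw [CoxeterSystem.IsReduced, ← hτprod] at hτlen
  have hlen' : cs.length (cs.wordProd ω * cs.simple j) + 1 = cs.length (cs.wordProd ω) := by
    rcases cs.length_mul_simple (cs.wordProd ω) j with h' | h' <;> omega
  have hσprod : cs.wordProd (τ ++ [j]) = cs.wordProd ω := by
    rw [cs.wordProd_append, cs.wordProd_singleton, ← hτprod,
      cs.simple_mul_simple_cancel_right]
  have hσred : cs.IsReduced (τ ++ [j]) := by
    show cs.length (cs.wordProd (τ ++ [j])) = (τ ++ [j]).length
    rw [hσprod]
    simp only [List.length_append, List.length_singleton]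
    omega
  have hmem : cs.simple j ∈ cs.rightInvSeq (τ ++ [j]) := by
    rw [show τ ++ [j] = τ.concat j from by simp, cs.rightInvSeq_concat]
    simp
  have h1 : signProd (cs.rightInvSeq (τ ++ [j])) (cs.simple j) = -1 :=
    signProd_of_nodup_mem (hσred.nodup_rightInvSeq) hmem
  have h2 : signProd (cs.rightInvSeq ω) (cs.simple j) = -1 := by
    rw [signProd_ris_eq cs hσprod.symm]
    exact h1
  by_contra hnot
  rw [signProd_of_not_mem hnot] at h2
  exact (by decide : (1 : ℤˣ) ≠ -1) h2

private lemma exchange {ω : List B} (hred : cs.IsReduced ω) {j : B}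
    (h : cs.length (cs.wordProd ω * cs.simple j) < cs.length (cs.wordProd ω)) :
    ∃ k, k < ω.length ∧ cs.wordProd ω * cs.simple j = cs.wordProd (ω.eraseIdx k) := by
  have hmem := simple_mem_rightInvSeq cs hred h
  obtain ⟨k, hk, hEq⟩ := List.mem_iff_getElem.mp hmem
  have hk' : k < ω.length := by
    have := cs.length_rightInvSeq ω
    omega
  refine ⟨k, hk', ?_⟩
  have hgetD : (cs.rightInvSeq ω).getD k 1 = cs.simple j := by
    rw [List.getD_eq_getElem _ _ hk]
    exact hEq
  rw [← hgetD]
  exact cs.wordProd_mul_getD_rightInvSeq ω k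

private lemma folding {u : W} {i j : B}
    (h1 : cs.length (cs.simple i * u) = cs.length u + 1)
    (h2 : cs.length (u * cs.simple j) = cs.length u + 1)
    (h3 : cs.length (cs.simple i * u * cs.simple j) = cs.length u) :
    cs.simple i * u = u * cs.simple j := by
  obtain ⟨ω, hωlen, hωprod⟩ := cs.exists_reduced_word u
  rw [CoxeterSystem.IsReduced, ← hωprod] at hωlen
  have hσprod : cs.wordProd (i :: ω) = cs.simple i * u := by
    rw [cs.wordProd_cons, ← hωprod]
  have hσred : cs.IsReduced (i :: ω) := by
    show cs.length (cs.wordProd (i :: ω)) = (i :: ω).length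
    rw [hσprod, h1, List.length_cons]
    omega
  have hdesc : cs.length (cs.wordProd (i :: ω) * cs.simple j) <
      cs.length (cs.wordProd (i :: ω)) := by
    rw [hσprod, h3, h1]
    omega
  obtain ⟨k, hk, hEq⟩ := exchange cs hσred hdesc
  rw [hσprod] at hEq
  cases k with
  | zero =>
    rw [List.eraseIdx_cons_zero, ← hωprod] at hEq
    calc cs.simple i * u = cs.simple i * u * cs.simple j * cs.simple j :=
          (cs.simple_mul_simple_cancel_right j).symm
      _ = u * cs.simple j := by rw [hEq]
  | succ k =>
    exfalso
    rw [List.eraseIdx_cons_succ, cs.wordProd_cons] at hEq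
    have hEq' : u * cs.simple j = cs.wordProd (ω.eraseIdx k) := by
      apply mul_left_cancel (a := cs.simple i)
      rw [← mul_assoc]
      exact hEq
    have hle := cs.length_wordProd_le (ω.eraseIdx k)
    rw [← hEq'] at hle
    have hkω : k < ω.length := by
      simp only [List.length_cons] at hk
      omega
    have herase := List.length_eraseIdx_add_one hkω
    omega

private lemma step {u : W} {i j : B}
    (h : cs.length u < cs.length (cs.simple i * u))
    (hne : cs.simple i * u ≠ u * cs.simple j) :
    cs.length (u * cs.simple j) < cs.length (cs.simple i * u * cs.simple j) := by
  have d1 : cs.length (cs.simple i * u) = cs.length u + 1 := by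
    rcases cs.length_simple_mul u i with h' | h' <;> omega
  by_contra hcon
  push_neg at hcon
  have d2 := cs.length_mul_simple u j
  have d3 := cs.length_simple_mul (u * cs.simple j) i
  rw [← mul_assoc] at d3
  have d4 : cs.length (cs.simple i * u) - cs.length (cs.simple j) ≤
      cs.length (cs.simple i * u * cs.simple j) :=
    cs.length_mul_ge_length_sub_length _ _
  rw [cs.length_simple] at d4
  have hnej : cs.length (u * cs.simple j) ≠ cs.length u := cs.length_mul_simple_ne u j
  rcases d2 with e2 | e2
  · rcases d3 with e3 | e3
    · omega
    · exact hne (folding cs d1 e2 (by omega))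
  · rcases d3 with e3 | e3
    · omega
    · omega

private lemma wordProd_mem_closure {J : Set B} {ω : List B} (h : ∀ b ∈ ω, b ∈ J) :
    cs.wordProd ω ∈ Subgroup.closure (cs.simple '' J) := by
  induction ω with
  | nil =>
    rw [cs.wordProd_nil]
    exact Subgroup.one_mem _
  | cons a ω ih =>
    rw [cs.wordProd_cons]
    exact Subgroup.mul_mem _
      (Subgroup.subset_closure ⟨a, h a List.mem_cons_self, rfl⟩)
      (ih (fun b hb => h b (List.mem_cons_of_mem a hb)))

private lemma exists_word_of_mem_closure {J : Set B} {y : W}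
    (hy : y ∈ Subgroup.closure (cs.simple '' J)) :
    ∃ ω : List B, (∀ b ∈ ω, b ∈ J) ∧ cs.wordProd ω = y := by
  induction hy using Subgroup.closure_induction with
  | mem x hx =>
    obtain ⟨j, hj, rfl⟩ := hx
    exact ⟨[j], by simpa using hj, cs.wordProd_singleton j⟩
  | one => exact ⟨[], by simp, cs.wordProd_nil⟩
  | mul x y hx hy ihx ihy =>
    obtain ⟨ω₁, h₁, rfl⟩ := ihx
    obtain ⟨ω₂, h₂, rfl⟩ := ihy
    refine ⟨ω₁ ++ ω₂, ?_, cs.wordProd_append ω₁ ω₂⟩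
    intro b hb
    rcases List.mem_append.mp hb with hb | hb
    · exact h₁ b hb
    · exact h₂ b hb
  | inv x hx ihx =>
    obtain ⟨ω, h₁, rfl⟩ := ihx
    exact ⟨ω.reverse, fun b hb => h₁ b (List.mem_reverse.mp hb), cs.wordProd_reverse ω⟩

private lemma key (i : B) (w : W) (J : Set B)
    (hi : w⁻¹ * cs.simple i * w ∉ Subgroup.closure (cs.simple '' J))
    (hlen : cs.length w < cs.length (cs.simple i * w)) :
    ∀ ω : List B, (∀ b ∈ ω, b ∈ J) →
      cs.length (w * cs.wordProd ω) < cs.length (cs.simple i * (w * cs.wordProd ω)) := by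
  intro ω
  induction ω using List.reverseRecOn with
  | nil => intro _; simpa using hlen
  | append_singleton ω j ih =>
    intro hωJ
    have hωJ' : ∀ b ∈ ω, b ∈ J := fun b hb => hωJ b (List.mem_append.mpr (Or.inl hb))
    have hjJ : j ∈ J := hωJ j (by simp)
    have ihu := ih hωJ'
    have hne : cs.simple i * (w * cs.wordProd ω) ≠ (w * cs.wordProd ω) * cs.simple j := by
      intro heq
      apply hi
      have h' : w⁻¹ * cs.simple i * w =
          cs.wordProd ω * cs.simple j * (cs.wordProd ω)⁻¹ := by
        have h'' : cs.simple i =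
            (w * cs.wordProd ω) * cs.simple j * (w * cs.wordProd ω)⁻¹ := by
          rw [← heq]; group
        rw [h'']; group
      rw [h']
      exact Subgroup.mul_mem _
        (Subgroup.mul_mem _ (wordProd_mem_closure cs hωJ')
          (Subgroup.subset_closure ⟨j, hjJ, rfl⟩))
        (Subgroup.inv_mem _ (wordProd_mem_closure cs hωJ'))
    rw [cs.wordProd_append, cs.wordProd_singleton]
    have e2 : w * (cs.wordProd ω * cs.simple j) = w * cs.wordProd ω * cs.simple j :=
      (mul_assoc _ _ _).symm
    rw [e2, ← mul_assoc]
    exact step cs ihu hne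

end StrongExchangeAux

/-- Let `(W,S)` be a Coxeter system, `J` a subset of the index set of the
simple reflections, `W_J` the subgroup generated by the simple reflections indexed by `J`,
and `W^J = {w : ℓ(w s_j) > ℓ(w) for all j ∈ J}`.  If `w ∈ W^J` and `s_i` is a simple
reflection such that `w⁻¹ s_i w ∉ W_J` and `ℓ(s_i w) > ℓ(w)`, then
`ℓ(s_i w y) > ℓ(w y)` for every `y ∈ W_J`. -/
theorem length_simple_mul_gt_of_minimal_coset_rep
    {B : Type*} {W : Type*} [Group W] {M : CoxeterMatrix B}
    (cs : CoxeterSystem M W) (J : Set B) (w : W)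
    (hw : ∀ j ∈ J, cs.length (w * cs.simple j) > cs.length w)
    (i : B)
    (hi : w⁻¹ * cs.simple i * w ∉ Subgroup.closure (cs.simple '' J))
    (hlen : cs.length (cs.simple i * w) > cs.length w) :
    ∀ y ∈ Subgroup.closure (cs.simple '' J),
      cs.length (cs.simple i * w * y) > cs.length (w * y) := by
  intro y hy
  obtain ⟨ω, hωJ, rfl⟩ := StrongExchangeAux.exists_word_of_mem_closure cs hy
  have h := StrongExchangeAux.key cs i w J hi hlen ω hωJ
  rw [mul_assoc]
  exact h
end

section
/- Let (W,S) be a Coxeter system, J a subset of the index set of the simple reflections, W_J the subgroup generated by {s_j : j ∈ J}, and W^J = {w ∈ W : ℓ(w s_j) > ℓ(w) for all j ∈ J}. If w ∈ W^J and s_i is a simple reflection such that t := w⁻¹ s_i w ∈ W_J, then ℓ(s_i w) = ℓ(w) + ℓ(t); in particular ℓ(s_i w) > ℓ(w). -/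
namespace CoxStmt15

open List CoxeterSystem

attribute [local instance] Classical.propDecidable

variable {B : Type*} {W : Type*} [Group W] {M : CoxeterMatrix B} (cs : CoxeterSystem M W)

local prefix:100 "s" => cs.simple
local prefix:100 "π" => cs.wordProd
local prefix:100 "ℓ" => cs.length
local prefix:100 "ris" => cs.rightInvSeq

/-- The sign-permutation of a simple reflection, as a function. -/
noncomputable def sigmaFun (i : B) : W × ZMod 2 → W × ZMod 2 :=
  fun p => (s i * p.1 * s i, p.2 + if p.1 = s i then 1 else 0)

theorem simple_conj_conj (i : B) (t : W) : s i * (s i * t * s i) * s i = t := by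
  have h1 : s i * (s i * t * s i) * s i = (s i * s i) * t * (s i * s i) := by group
  rw [h1, cs.simple_mul_simple_self]
  group

theorem simple_conj_eq_iff (i : B) (t : W) : (s i * t * s i = s i) ↔ (t = s i) := by
  constructor
  · intro h
    have h2 := congrArg (fun x => s i * x * s i) h
    rwa [simple_conj_conj cs, cs.simple_mul_simple_cancel_right] at h2
  · rintro rfl; rw [cs.simple_mul_simple_cancel_right]

theorem sigmaFun_involutive (i : B) : Function.Involutive (sigmaFun cs i) := by
  intro ⟨t, e⟩
  simp only [sigmaFun]
  refine Prod.ext ?_ ?_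
  · exact simple_conj_conj cs i t
  · simp only [simple_conj_eq_iff cs]
    by_cases ht : t = s i <;> simp [ht]
    rw [add_assoc, show ((1 : ZMod 2)) + 1 = 0 by decide, add_zero]

/-- The sign-permutation of a simple reflection. -/
noncomputable def sigma (i : B) : Equiv.Perm (W × ZMod 2) :=
  (sigmaFun_involutive cs i).toPerm

theorem sigma_apply (i : B) (t : W) (e : ZMod 2) :
    sigma cs i (t, e) = (s i * t * s i, e + if t = s i then 1 else 0) := rfl

/-- Key formula: the product of sign permutations along a word acts by conjugation and
counting in the right inversion sequence. -/
theorem prod_sigma_apply (ω : List B) (t : W) (e : ZMod 2) :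
    (List.map (sigma cs) ω).prod (t, e)
      = (π ω * t * (π ω)⁻¹, e + ((ris ω).count t : ZMod 2)) := by
  induction ω generalizing e with
  | nil => simp
  | cons i ω ih =>
    rw [List.map_cons, List.prod_cons, Equiv.Perm.mul_apply, ih, sigma_apply]
    have hris : ris (i :: ω) = ((π ω)⁻¹ * s i * π ω) :: ris ω := rfl
    refine Prod.ext ?_ ?_
    · simp only [wordProd_cons, mul_inv_rev, cs.inv_simple]
      group
    · simp only [hris, List.count_cons]
      have hiff : ((π ω)⁻¹ * s i * π ω = t) ↔ (π ω * t * (π ω)⁻¹ = s i) := by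
        constructor
        · intro h; rw [← h]; group
        · intro h; rw [← h]; group
      by_cases hc : (π ω)⁻¹ * s i * π ω = t
      · simp only [hiff.mp hc, if_pos rfl, hc, beq_self_eq_true, if_pos]
        push_cast
        ring
      · have h2 : ¬(π ω * t * (π ω)⁻¹ = s i) := fun h => hc (hiff.mpr h)
        have h3 : ¬(((π ω)⁻¹ * s i * π ω) == t) = true := by
          simpa using hc
        simp [h2, h3]

theorem pow_inv_mul_simple (i j : B) (k : ℕ) :
    ((s i * s j) ^ k)⁻¹ * s j = s j * (s i * s j) ^ k := by
  induction k with
  | zero => simp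
  | succ k ih =>
    have h1 : ((s i * s j) ^ (k+1))⁻¹ * s j
        = (s i * s j)⁻¹ * (((s i * s j) ^ k)⁻¹ * s j) := by
      rw [pow_succ, mul_inv_rev]; group
    rw [h1, ih, mul_inv_rev, cs.inv_simple, cs.inv_simple, pow_succ']
    simp only [mul_assoc]

theorem sigma_liftable : M.IsLiftable (sigma cs) := by
  intro i j
  set m := M i j with hm
  set L : List B := (List.replicate m ([i, j] : List B)).flatten with hL
  have hmap : (sigma cs i * sigma cs j) ^ m = (List.map (sigma cs) L).prod := by
    rw [hL, List.map_flatten, List.map_replicate, List.prod_flatten, List.map_replicate]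
    simp [List.prod_replicate]
  have hπk : ∀ k : ℕ, π ((List.replicate k ([i, j] : List B)).flatten) = (s i * s j) ^ k := by
    intro k
    unfold CoxeterSystem.wordProd
    rw [List.map_flatten, List.map_replicate, List.prod_flatten, List.map_replicate]
    simp [List.prod_replicate, wordProd]
  have hz : (s i * s j) ^ m = 1 := cs.simple_mul_simple_pow i j
  have hris : ∀ k : ℕ, ris ((List.replicate k ([i, j] : List B)).flatten)
      = (List.range (2 * k)).reverse.map (fun r => s j * (s i * s j) ^ r) := by
    intro k
    induction k with
    | zero => simp
    | succ k ih =>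
      have hrep : (List.replicate (k+1) ([i, j] : List B)).flatten
          = i :: j :: (List.replicate k ([i, j] : List B)).flatten := by
        rw [List.replicate_succ, List.flatten_cons]; rfl
      rw [hrep]
      have h1 : ris (i :: j :: (List.replicate k ([i, j] : List B)).flatten)
          = ((π (j :: (List.replicate k ([i, j] : List B)).flatten))⁻¹ * s i
              * π (j :: (List.replicate k ([i, j] : List B)).flatten))
            :: ((π ((List.replicate k ([i, j] : List B)).flatten))⁻¹ * s j
              * π ((List.replicate k ([i, j] : List B)).flatten))
            :: ris ((List.replicate k ([i, j] : List B)).flatten) := rfl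
      rw [h1, ih, wordProd_cons, hπk]
      have hb : ((s i * s j) ^ k)⁻¹ * s j * (s i * s j) ^ k
          = s j * (s i * s j) ^ (2 * k) := by
        rw [pow_inv_mul_simple cs, mul_assoc, ← pow_add]
        congr 2
        omega
      have ha : (s j * (s i * s j) ^ k)⁻¹ * s i * (s j * (s i * s j) ^ k)
          = s j * (s i * s j) ^ (2 * k + 1) := by
        rw [mul_inv_rev, cs.inv_simple]
        rw [show ((s i * s j) ^ k)⁻¹ * s j * s i * (s j * (s i * s j) ^ k)
            = ((s i * s j) ^ k)⁻¹ * s j * (s i * s j) * (s i * s j) ^ k by group]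
        rw [mul_assoc (((s i * s j) ^ k)⁻¹ * s j)]
        rw [← pow_succ']
        rw [show ((s i * s j) ^ k)⁻¹ * s j = s j * (s i * s j)^k from pow_inv_mul_simple cs i j k]
        rw [mul_assoc, ← pow_add]
        congr 2
        omega
      rw [ha, hb]
      rw [show 2 * (k + 1) = (2 * k + 1) + 1 by ring, List.range_succ, List.reverse_append,
        List.range_succ, List.reverse_append]
      simp
  have natCast_zmod_two_even : ∀ {n : ℕ}, Even n → ((n : ZMod 2) = 0) := by
    rintro n ⟨c, rfl⟩
    push_cast
    rw [← two_mul, show ((2:ZMod 2)) = 0 by decide, zero_mul]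
  have heven : ∀ t : W, Even ((ris L).count t) := by
    intro t
    rw [hL, hris m, List.count_eq_countP, List.countP_map, List.countP_reverse]
    rw [two_mul, List.range_add, List.countP_append, List.countP_map]
    have hfun : (((fun x => x == t) ∘ fun r => s j * (s i * s j) ^ r) ∘ (fun x => m + x))
        = ((fun x => x == t) ∘ fun r => s j * (s i * s j) ^ r) := by
      funext r
      simp only [Function.comp_apply, pow_add, hz, one_mul]
    rw [hfun]
    exact ⟨_, rfl⟩
  rw [hmap]
  apply Equiv.ext
  rintro ⟨t, e⟩
  have hπL : π L = 1 := by rw [hL, hπk m]; exact hz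
  rw [prod_sigma_apply, hπL, natCast_zmod_two_even (heven t)]
  simp

/-- The sign representation `W →* Perm (W × ZMod 2)`. -/
noncomputable def phi : W →* Equiv.Perm (W × ZMod 2) :=
  cs.lift ⟨sigma cs, sigma_liftable cs⟩

theorem phi_simple (i : B) : phi cs (s i) = sigma cs i :=
  cs.lift_apply_simple (sigma_liftable cs) i

theorem phi_wordProd (ω : List B) : phi cs (π ω) = (List.map (sigma cs) ω).prod := by
  unfold CoxeterSystem.wordProd
  rw [MonoidHom.map_list_prod, List.map_map]
  congr 1
  apply List.map_congr_left
  intro i _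
  exact phi_simple cs i

/-- The reflection cocycle. -/
noncomputable def eta (w t : W) : ZMod 2 := (phi cs w (t, 0)).2

theorem eta_wordProd (ω : List B) (t : W) :
    eta cs (π ω) t = (((ris ω).count t : ℕ) : ZMod 2) := by
  unfold eta
  rw [phi_wordProd cs, prod_sigma_apply]
  simp

theorem phi_apply (w t : W) (e : ZMod 2) :
    phi cs w (t, e) = (w * t * w⁻¹, e + eta cs w t) := by
  obtain ⟨ω, _, rfl⟩ := cs.exists_reduced_word' w
  rw [phi_wordProd cs, prod_sigma_apply, eta_wordProd cs]

theorem eta_mul (w₁ w₂ t : W) :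
    eta cs (w₁ * w₂) t = eta cs w₂ t + eta cs w₁ (w₂ * t * w₂⁻¹) := by
  have h := phi_apply cs (w₁ * w₂) t 0
  rw [map_mul, Equiv.Perm.mul_apply, phi_apply cs w₂ t 0, phi_apply cs] at h
  have h2 := congrArg Prod.snd h
  simpa using h2.symm

theorem eta_one (t : W) : eta cs 1 t = 0 := by
  unfold eta
  rw [map_one]
  rfl

theorem eta_inv (w t : W) : eta cs w⁻¹ t = eta cs w (w⁻¹ * t * w) := by
  have h := eta_mul cs w w⁻¹ t
  rw [mul_inv_cancel, eta_one cs, inv_inv] at h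
  have h1 : eta cs w⁻¹ t + eta cs w (w⁻¹ * t * w) = 0 := h.symm
  have h2 := congrArg (· + eta cs w (w⁻¹ * t * w)) h1
  simp only [zero_add, add_assoc] at h2
  rw [show eta cs w (w⁻¹ * t * w) + eta cs w (w⁻¹ * t * w)
      = 2 * eta cs w (w⁻¹ * t * w) by ring, show ((2 : ZMod 2)) = 0 by decide] at h2
  simpa using h2

theorem eta_simple_self (i : B) : eta cs (s i) (s i) = 1 := by
  have h := eta_wordProd cs [i] (s i)
  simp only [wordProd_singleton] at h
  rw [h]
  have h2 : ris [i] = [s i] := by simp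
  rw [h2]
  simp

theorem eta_reflection_self {t : W} (ht : cs.IsReflection t) : eta cs t t = 1 := by
  obtain ⟨u, i, rfl⟩ := ht
  have h1 : eta cs (u * s i * u⁻¹) (u * s i * u⁻¹)
      = eta cs u⁻¹ (u * s i * u⁻¹) + eta cs (u * s i) (u⁻¹ * (u * s i * u⁻¹) * u) := by
    have h := eta_mul cs (u * s i) u⁻¹ (u * s i * u⁻¹)
    rw [inv_inv] at h
    rw [show u * s i * u⁻¹ = (u * s i) * u⁻¹ by group] at h ⊢
    exact h
  have h2 : u⁻¹ * (u * s i * u⁻¹) * u = s i := by group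
  rw [h2] at h1
  have h3 : eta cs (u * s i) (s i) = eta cs (s i) (s i) + eta cs u (s i * s i * (s i)⁻¹) :=
    eta_mul cs u (s i) (s i)
  rw [show s i * s i * (s i)⁻¹ = s i by group] at h3
  have h4 : eta cs u⁻¹ (u * s i * u⁻¹) = eta cs u (s i) := by
    rw [eta_inv cs, h2]
  rw [h1, h3, h4, eta_simple_self cs]
  rw [show eta cs u (s i) + (1 + eta cs u (s i))
      = 1 + 2 * eta cs u (s i) by ring, show ((2 : ZMod 2)) = 0 by decide]
  ring

theorem eta_eq_one_of_descent {ω : List B} {t : W}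
    (ht : cs.IsReflection t) (hlt : ℓ (π ω * t) < ℓ (π ω)) : eta cs (π ω) t = 1 := by
  by_contra h
  have h0 : eta cs (π ω) t = 0 := by
    rcases (show ∀ x : ZMod 2, x = 0 ∨ x = 1 by decide) (eta cs (π ω) t) with h' | h'
    · exact h'
    · exact absurd h' h
  have h1 : eta cs (π ω * t) t = 1 := by
    rw [eta_mul cs (π ω) t t, show t * t * t⁻¹ = t by group,
      eta_reflection_self cs ht, h0, add_zero]
  obtain ⟨χ, hχred, hχ⟩ := cs.exists_reduced_word' (π ω * t)
  rw [hχ] at h1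
  have hmem : t ∈ ris χ := by
    have hne : (ris χ).count t ≠ 0 := by
      intro hc0
      rw [eta_wordProd cs, hc0] at h1
      simpa using h1.symm
    exact List.count_pos_iff.mp (Nat.pos_of_ne_zero hne)
  have hinv := cs.isRightInversion_of_mem_rightInvSeq hχred hmem
  have h2 := hinv.2
  rw [← hχ, mul_assoc, ht.mul_self, mul_one] at h2
  omega

theorem mem_rightInvSeq_of_descent {ω : List B} {t : W}
    (ht : cs.IsReflection t) (hlt : ℓ (π ω * t) < ℓ (π ω)) : t ∈ ris ω := by
  have h1 := eta_eq_one_of_descent cs ht hlt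
  rw [eta_wordProd cs] at h1
  have hne : (ris ω).count t ≠ 0 := by
    intro hc0
    rw [hc0] at h1
    simpa using h1.symm
  exact List.count_pos_iff.mp (Nat.pos_of_ne_zero hne)

/-- Strong exchange property. -/
theorem exists_eraseIdx_of_descent {ω : List B} {t : W}
    (ht : cs.IsReflection t) (hlt : ℓ (π ω * t) < ℓ (π ω)) :
    ∃ k, k < ω.length ∧ π ω * t = π (ω.eraseIdx k) := by
  have hmem := mem_rightInvSeq_of_descent cs ht hlt
  obtain ⟨k, hk, hkt⟩ := List.mem_iff_getElem.mp hmem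
  have hk' : k < ω.length := by rw [← cs.length_rightInvSeq ω]; exact hk
  refine ⟨k, hk', ?_⟩
  have h2 := cs.wordProd_mul_getD_rightInvSeq ω k
  rwa [List.getD_eq_getElem (ris ω) 1 hk, hkt] at h2

theorem wordProd_mem_closure {J : Set B} {ω : List B} (hω : ∀ j ∈ ω, j ∈ J) :
    π ω ∈ Subgroup.closure (cs.simple '' J) := by
  induction ω with
  | nil => rw [wordProd_nil]; exact Subgroup.one_mem _
  | cons i ω ih =>
    rw [wordProd_cons]
    exact mul_mem (Subgroup.subset_closure ⟨i, hω i List.mem_cons_self, rfl⟩)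
      (ih fun j hj => hω j (List.mem_cons_of_mem i hj))

theorem exists_jword {J : Set B} {v : W} (hv : v ∈ Subgroup.closure (cs.simple '' J)) :
    ∃ ω : List B, (∀ j ∈ ω, j ∈ J) ∧ v = π ω := by
  refine Subgroup.closure_induction ?_ ?_ ?_ ?_ hv
  · rintro x ⟨j, hj, rfl⟩
    exact ⟨[j], by simpa using hj, by simp⟩
  · exact ⟨[], by simp, by simp⟩
  · rintro x y _ _ ⟨ωx, hx, rfl⟩ ⟨ωy, hy, rfl⟩
    refine ⟨ωx ++ ωy, ?_, (cs.wordProd_append ωx ωy).symm⟩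
    intro j hj
    rcases List.mem_append.mp hj with h | h
    exacts [hx j h, hy j h]
  · rintro x _ ⟨ω, hωJ, rfl⟩
    exact ⟨ω.reverse, fun j hj => hωJ j (List.mem_reverse.mp hj),
      (cs.wordProd_reverse ω).symm⟩

theorem exists_reduced_jword {J : Set B} {v : W} (hv : v ∈ Subgroup.closure (cs.simple '' J)) :
    ∃ ω : List B, cs.IsReduced ω ∧ (∀ j ∈ ω, j ∈ J) ∧ v = π ω := by
  obtain ⟨ω0, hω0, hv0⟩ := exists_jword cs hv
  have hex : ∃ n, ∃ ω : List B, ω.length = n ∧ (∀ j ∈ ω, j ∈ J) ∧ v = π ω :=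
    ⟨ω0.length, ω0, rfl, hω0, hv0⟩
  obtain ⟨ω, hlen, hωJ, rfl⟩ := Nat.find_spec hex
  refine ⟨ω, ?_, hωJ, rfl⟩
  by_contra hnred
  -- find the minimal non-reduced prefix
  have hQ : ∃ k, ¬ cs.IsReduced (ω.take k) := ⟨ω.length, by rwa [List.take_length]⟩
  set k := Nat.find hQ with hkdef
  have hkspec : ¬ cs.IsReduced (ω.take k) := Nat.find_spec hQ
  have hk0 : k ≠ 0 := by
    intro h0
    apply hkspec
    rw [h0, List.take_zero]
    unfold CoxeterSystem.IsReduced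
    simp
  have hkle : k ≤ ω.length := Nat.find_le (by rwa [List.take_length])
  have hαred : cs.IsReduced (ω.take (k - 1)) := by
    by_contra hc
    have h2 : k ≤ k - 1 := Nat.find_le hc
    omega
  have hk1lt : k - 1 < ω.length := by omega
  have htake : ω.take k = ω.take (k - 1) ++ [ω[k-1]] := by
    conv_lhs => rw [show k = (k - 1) + 1 by omega]
    rw [List.take_succ, List.getElem?_eq_getElem hk1lt]
    rfl
  set α := ω.take (k - 1) with hαdef
  set b := ω[k-1] with hbdef
  have hαlen : α.length = k - 1 := by
    rw [hαdef, List.length_take]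
    omega
  have hπtake : π (ω.take k) = π α * s b := by
    rw [htake, wordProd_append, wordProd_singleton]
  have hlt : ℓ (π α * s b) < ℓ (π α) := by
    rcases cs.length_mul_simple (π α) b with h | h
    · exfalso
      apply hkspec
      unfold CoxeterSystem.IsReduced
      rw [hπtake, h, hαred, hαlen]
      have : (ω.take k).length = k := by rw [List.length_take]; omega
      rw [this]
      omega
    · omega
  obtain ⟨k', hk', heq⟩ := exists_eraseIdx_of_descent cs (cs.isReflection_simple b) hlt
  -- build a shorter J-word
  have hωsplit : π ω = π (ω.take k) * π (ω.drop k) := by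
    rw [← wordProd_append, List.take_append_drop]
  have hnew : π ω = π ((α.eraseIdx k') ++ ω.drop k) := by
    rw [hωsplit, hπtake, heq, wordProd_append]
  have hnewJ : ∀ j ∈ (α.eraseIdx k') ++ ω.drop k, j ∈ J := by
    intro j hj
    rcases List.mem_append.mp hj with h | h
    · exact hωJ j (List.take_subset _ _ ((List.eraseIdx_sublist α k').subset h))
    · exact hωJ j (List.drop_subset _ _ h)
  have hnewlen : ((α.eraseIdx k') ++ ω.drop k).length < ω.length := by
    rw [List.length_append, List.length_eraseIdx, if_pos hk', hαlen, List.length_drop]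
    omega
  rw [hlen] at hnewlen
  exact Nat.find_min hex hnewlen ⟨_, rfl, hnewJ, hnew⟩

theorem length_mul_of_min {J : Set B} {u : W}
    (hmin : ∀ x ∈ Subgroup.closure (cs.simple '' J), ℓ u ≤ ℓ (u * x)) :
    ∀ n (v : W), v ∈ Subgroup.closure (cs.simple '' J) → ℓ v = n →
      ℓ (u * v) = ℓ u + ℓ v := by
  intro n
  induction n using Nat.strong_induction_on with
  | _ n ih =>
    intro v hv hn
    obtain ⟨ω, hred, hωJ, rfl⟩ := exists_reduced_jword cs hv
    rcases eq_or_ne ω [] with rfl | hne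
    · simp
    · have hωsplit : ω.dropLast ++ [ω.getLast hne] = ω := List.dropLast_append_getLast hne
      set jl := ω.getLast hne with hjl
      set α := ω.dropLast with hαdef
      have hαred : cs.IsReduced α := by
        have h := hred.take (ω.length - 1)
        rwa [hαdef, List.dropLast_eq_take]
      have hαlen : α.length = ω.length - 1 := List.length_dropLast
      have hαJ : ∀ j ∈ α, j ∈ J := fun j hj => hωJ j (List.dropLast_subset ω hj)
      have hαmem : π α ∈ Subgroup.closure (cs.simple '' J) := wordProd_mem_closure cs hαJ
      have hπω : π ω = π α * s jl := by
        conv_lhs => rw [← hωsplit]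
        rw [wordProd_append, wordProd_singleton]
      have hlω : ℓ (π ω) = ω.length := hred
      have hlα : ℓ (π α) = ω.length - 1 := by rw [hαred]; exact hαlen
      have hωpos : 0 < ω.length := List.length_pos_iff.mpr hne
      have hIH : ℓ (u * π α) = ℓ u + ℓ (π α) := by
        refine ih (ω.length - 1) (by omega) (π α) hαmem ?_
        · exact hlα
      rw [hπω, ← mul_assoc]
      rcases cs.length_mul_simple (u * π α) jl with h | h
      · rw [h, hIH, hlα, ← hπω, hlω]
        omega
      · exfalso
        -- the descent case: strong exchange on the concatenated reduced word
        obtain ⟨υ, hυred, hυ⟩ := cs.exists_reduced_word' u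
        have hπχ : π (υ ++ α) = u * π α := by rw [wordProd_append, ← hυ]
        have hυlen : υ.length = ℓ u := by rw [hυ]; exact hυred.symm
        have hlt : ℓ (π (υ ++ α) * s jl) < ℓ (π (υ ++ α)) := by
          rw [hπχ]
          omega
        obtain ⟨k, hk, heq⟩ := exists_eraseIdx_of_descent cs (cs.isReflection_simple jl) hlt
        rw [hπχ] at heq
        rw [List.length_append] at hk
        rcases lt_or_ge k υ.length with hkυ | hkυ
        · -- deleted letter inside υ: contradicts minimality of u in its coset
          rw [List.eraseIdx_append_of_lt_length hkυ α, wordProd_append] at heq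
          have hx : u * (π α * s jl * (π α)⁻¹) = π (υ.eraseIdx k) := by
            have h9 := congrArg (· * (π α)⁻¹) heq
            rw [show u * π α * s jl * (π α)⁻¹ = u * (π α * s jl * (π α)⁻¹) by group] at h9
            rw [h9]
            group
          have hxmem : π α * s jl * (π α)⁻¹ ∈ Subgroup.closure (cs.simple '' J) := by
            refine mul_mem (mul_mem hαmem ?_) (inv_mem hαmem)
            exact Subgroup.subset_closure ⟨jl, hωJ jl (List.getLast_mem hne), rfl⟩
          have h1 := hmin _ hxmem
          rw [hx] at h1
          have h2 := cs.length_wordProd_le (υ.eraseIdx k)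
          rw [List.length_eraseIdx, if_pos hkυ] at h2
          omega
        · -- deleted letter inside α: contradicts reducedness of ω
          rw [List.eraseIdx_append_of_length_le hkυ α, wordProd_append, ← hυ] at heq
          have h1 : π α * s jl = π (α.eraseIdx (k - υ.length)) := by
            rw [mul_assoc] at heq
            exact mul_left_cancel heq
          have h2 := cs.length_wordProd_le (α.eraseIdx (k - υ.length))
          rw [← h1, ← hπω, hlω, List.length_eraseIdx] at h2
          have hkχ : k - υ.length < α.length := by omega
          rw [if_pos hkχ, hαlen] at h2
          omega

theorem length_mul_of_no_descent {J : Set B} {u : W}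
    (hu : ∀ j ∈ J, ℓ u < ℓ (u * s j)) {v : W}
    (hv : v ∈ Subgroup.closure (cs.simple '' J)) :
    ℓ (u * v) = ℓ u + ℓ v := by
  have hex : ∃ n, ∃ x, x ∈ Subgroup.closure (cs.simple '' J) ∧ ℓ (u * x) = n :=
    ⟨ℓ u, 1, Subgroup.one_mem _, by rw [mul_one]⟩
  obtain ⟨x₀, hx₀mem, hx₀⟩ := Nat.find_spec hex
  set umin := u * x₀ with humin
  have hmin : ∀ y ∈ Subgroup.closure (cs.simple '' J), ℓ umin ≤ ℓ (umin * y) := by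
    intro y hy
    have hmem : x₀ * y ∈ Subgroup.closure (cs.simple '' J) := mul_mem hx₀mem hy
    have hle : Nat.find hex ≤ ℓ (u * (x₀ * y)) := Nat.find_le ⟨x₀ * y, hmem, rfl⟩
    have h2 : umin * y = u * (x₀ * y) := by rw [humin, mul_assoc]
    rw [h2, hx₀]
    exact hle
  have hadd := length_mul_of_min cs hmin
  -- show x₀ = 1
  have hx₀inv : x₀⁻¹ ∈ Subgroup.closure (cs.simple '' J) := inv_mem hx₀mem
  have hx1 : x₀ = 1 := by
    by_contra hne1
    obtain ⟨ρ, hρred, hρJ, hρ⟩ := exists_reduced_jword cs hx₀inv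
    have hρne : ρ ≠ [] := by
      intro h0
      apply hne1
      rw [h0, wordProd_nil] at hρ
      rw [← inv_inv x₀, hρ, inv_one]
    have hρsplit : ρ.dropLast ++ [ρ.getLast hρne] = ρ := List.dropLast_append_getLast hρne
    set jl := ρ.getLast hρne with hjl
    set ρ' := ρ.dropLast with hρ'def
    have hρ'red : cs.IsReduced ρ' := by
      have h := hρred.take (ρ.length - 1)
      rwa [hρ'def, List.dropLast_eq_take]
    have hρ'J : ∀ j ∈ ρ', j ∈ J := fun j hj => hρJ j (List.dropLast_subset ρ hj)
    have hρ'mem : π ρ' ∈ Subgroup.closure (cs.simple '' J) := wordProd_mem_closure cs hρ'J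
    have hπρ : x₀⁻¹ = π ρ' * s jl := by
      rw [hρ]
      conv_lhs => rw [← hρsplit]
      rw [wordProd_append, wordProd_singleton]
    have hjlJ : jl ∈ J := hρJ jl (List.getLast_mem hρne)
    have hinvs : x₀⁻¹ * s jl = π ρ' := by
      rw [hπρ, mul_assoc, cs.simple_mul_simple_self, mul_one]
    have husjl : u * s jl = umin * π ρ' := by
      rw [humin, mul_assoc, ← hinvs]
      group
    have h1 : ℓ (u * s jl) = ℓ umin + ℓ (π ρ') := by
      rw [husjl]
      exact hadd (ℓ (π ρ')) (π ρ') hρ'mem rfl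
    have h2 : ℓ u = ℓ umin + ℓ x₀⁻¹ := by
      have : u = umin * x₀⁻¹ := by rw [humin]; group
      rw [this]
      exact hadd (ℓ x₀⁻¹) x₀⁻¹ hx₀inv rfl
    have h3 : ℓ x₀⁻¹ = ρ.length := by rw [hρ]; exact hρred
    have h4 : ℓ (π ρ') = ρ.length - 1 := by
      rw [hρ'red]
      exact List.length_dropLast
    have h5 : 0 < ρ.length := List.length_pos_iff.mpr hρne
    have h6 := hu jl hjlJ
    omega
  rw [hx1, mul_one] at humin
  have h9 := hadd (ℓ v) v hv rfl
  rw [humin] at h9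
  exact h9

end CoxStmt15

/-- Let `(W,S)` be a Coxeter system, `J` a subset of the index set of the
simple reflections, `W_J` the subgroup generated by the simple reflections indexed by `J`,
and `W^J = {w : ℓ(w s_j) > ℓ(w) for all j ∈ J}`.  If `w ∈ W^J` and `s_i` is a simple
reflection such that `t := w⁻¹ s_i w ∈ W_J`, then `ℓ(s_i w) = ℓ(w) + ℓ(t)`;
in particular `ℓ(s_i w) > ℓ(w)`. -/
theorem length_simple_mul_of_conj_mem
    {B : Type*} {W : Type*} [Group W] {M : CoxeterMatrix B}
    (cs : CoxeterSystem M W) (J : Set B) (w : W)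
    (hw : ∀ j ∈ J, cs.length (w * cs.simple j) > cs.length w)
    (i : B)
    (ht : w⁻¹ * cs.simple i * w ∈ Subgroup.closure (cs.simple '' J)) :
    cs.length (cs.simple i * w) = cs.length w + cs.length (w⁻¹ * cs.simple i * w) ∧
      cs.length (cs.simple i * w) > cs.length w := by
  have hkey : cs.length (w * (w⁻¹ * cs.simple i * w))
      = cs.length w + cs.length (w⁻¹ * cs.simple i * w) :=
    CoxStmt15.length_mul_of_no_descent cs (fun j hj => hw j hj) ht
  have hsw : cs.simple i * w = w * (w⁻¹ * cs.simple i * w) := by group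
  have h1 : cs.length (cs.simple i * w) = cs.length w + cs.length (w⁻¹ * cs.simple i * w) := by
    rw [hsw, hkey]
  refine ⟨h1, ?_⟩
  have hne : w⁻¹ * cs.simple i * w ≠ 1 := by
    intro h0
    have hs1 : cs.simple i = 1 := by
      have h2 := congrArg (fun x => w * x * w⁻¹) h0
      simpa [mul_assoc] using h2
    have h2 := cs.length_simple i
    rw [hs1, cs.length_one] at h2
    omega
  have hpos : 0 < cs.length (w⁻¹ * cs.simple i * w) := by
    rcases Nat.eq_zero_or_pos (cs.length (w⁻¹ * cs.simple i * w)) with h0 | h0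
    · exact absurd (cs.length_eq_zero_iff.mp h0) hne
    · exact h0
  omega
end

section
/- Let γ₁ ≥ γ₂ ≥ … ≥ γ_r be integers, let J = {i : 1 ≤ i ≤ r−1, γ_i = γ_{i+1}}, and let W^J = {w ∈ S_r : ℓ(w s_j) > ℓ(w) for all j ∈ J}, where ℓ is the Coxeter length on S_r and s_j = (j, j+1). Suppose w₂ ∈ W^J and λ ∈ ℤ^r is w₂-almost dominant. If 1 ≤ i, j ≤ r with i ≠ j and λ_i + r − i = λ_j + r − j, then γ_{w₂⁻¹(i)} ≠ γ_{w₂⁻¹(j)}. -/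
/-- An adjacent transposition preserves strict order on all pairs except the swapped pair. -/
lemma swap_lt {r : ℕ} (k k' : Fin r) (hk : (k : ℕ) + 1 = (k' : ℕ))
    (a b : Fin r) (hab : a < b) (hne : ¬(a = k ∧ b = k')) :
    Equiv.swap k k' a < Equiv.swap k k' b := by
  have hab' : (a : ℕ) < (b : ℕ) := hab
  rcases eq_or_ne a k with rfl | h1
  · rcases eq_or_ne b k' with rfl | h4
    · exact absurd ⟨rfl, rfl⟩ hne
    · have hbk : b ≠ a := Fin.ne_of_gt hab
      rw [Equiv.swap_apply_left, Equiv.swap_apply_of_ne_of_ne hbk h4]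
      have h4' : (b : ℕ) ≠ (k' : ℕ) := fun h => h4 (Fin.val_eq_val b k' |>.mp h)
      exact Fin.lt_def.mpr (by omega)
  · rcases eq_or_ne a k' with rfl | h2
    · have h1' : (a : ℕ) ≠ (k : ℕ) := fun h => h1 (Fin.val_eq_val a k |>.mp h)
      have hbk : b ≠ k := fun h => by subst h; omega
      have hbk' : b ≠ a := Fin.ne_of_gt hab
      rw [Equiv.swap_apply_right, Equiv.swap_apply_of_ne_of_ne hbk hbk']
      exact Fin.lt_def.mpr (by omega)
    · rw [Equiv.swap_apply_of_ne_of_ne h1 h2]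
      rcases eq_or_ne b k with rfl | h3
      · rw [Equiv.swap_apply_left]
        exact Fin.lt_def.mpr (by omega)
      · rcases eq_or_ne b k' with rfl | h4
        · rw [Equiv.swap_apply_right]
          have h1' : (a : ℕ) ≠ (k : ℕ) := fun h => h1 (Fin.val_eq_val a k |>.mp h)
          exact Fin.lt_def.mpr (by omega)
        · rw [Equiv.swap_apply_of_ne_of_ne h3 h4]
          exact hab

/-- If `(k, k+1)` is an inversion of `w`, multiplying by the adjacent swap does not
increase the inversion number. -/
lemma swap_card_le {r : ℕ} (w : Equiv.Perm (Fin r)) (k k' : Fin r)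
    (hk : (k : ℕ) + 1 = (k' : ℕ)) (hw : w k' < w k) :
    invLen (w * Equiv.swap k k') ≤ invLen w := by
  apply Finset.card_le_card_of_injOn
    (fun p => (Equiv.swap k k' p.1, Equiv.swap k k' p.2))
  · intro p hp
    simp only [Finset.mem_coe, Finset.mem_filter, Finset.mem_univ, true_and] at hp ⊢
    simp only [Equiv.Perm.mul_apply] at hp ⊢
    have hne : ¬(p.1 = k ∧ p.2 = k') := by
      rintro ⟨h1, h2⟩
      rw [h1, h2, Equiv.swap_apply_left, Equiv.swap_apply_right] at hp
      exact absurd hp.2 (lt_asymm hw)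
    exact ⟨swap_lt k k' hk p.1 p.2 hp.1 hne, hp.2⟩
  · intro p _ q _ h
    have h1 := congrArg Prod.fst h
    have h2 := congrArg Prod.snd h
    simp only at h1 h2
    exact Prod.ext ((Equiv.swap k k').injective h1) ((Equiv.swap k k').injective h2)

/-- On adjacent positions with equal `γ`, the `W^J` condition forces `w₂` to increase. -/
lemma adj_incr {r : ℕ} (γ : Fin r → ℤ) (w₂ : Equiv.Perm (Fin r))
    (hw₂ : ∀ (j : ℕ) (hj : j + 1 < r), γ ⟨j, by omega⟩ = γ ⟨j + 1, hj⟩ →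
      invLen w₂ < invLen (w₂ * Equiv.swap ⟨j, by omega⟩ ⟨j + 1, hj⟩))
    (a b : Fin r) (hab : (a : ℕ) + 1 = (b : ℕ)) (hg : γ a = γ b) :
    w₂ a < w₂ b := by
  have hb : (a : ℕ) + 1 < r := hab ▸ b.isLt
  have ha' : (⟨(a : ℕ), by omega⟩ : Fin r) = a := rfl
  have hb' : (⟨(a : ℕ) + 1, hb⟩ : Fin r) = b := Fin.ext hab
  have h := hw₂ a.val hb (by rw [ha', hb']; exact hg)
  rw [ha', hb'] at h
  rcases lt_trichotomy (w₂ a) (w₂ b) with h' | h' | h'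
  · exact h'
  · exact absurd (w₂.injective h') (fun e => by subst e; omega)
  · exact absurd h (not_lt.mpr (swap_card_le w₂ a b hab h'))

/-- On an interval where `γ` is constant, `w₂` is strictly increasing. -/
lemma interval_incr {r : ℕ} (γ : Fin r → ℤ) (hγ : Antitone γ) (w₂ : Equiv.Perm (Fin r))
    (hw₂ : ∀ (j : ℕ) (hj : j + 1 < r), γ ⟨j, by omega⟩ = γ ⟨j + 1, hj⟩ →
      invLen w₂ < invLen (w₂ * Equiv.swap ⟨j, by omega⟩ ⟨j + 1, hj⟩)) :
    ∀ (n : ℕ) (a b : Fin r), (b : ℕ) - (a : ℕ) = n → a < b → γ a = γ b → w₂ a < w₂ b := by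
  intro n
  induction n using Nat.strong_induction_on with
  | _ n ih =>
    intro a b hn hab hg
    have hab' : (a : ℕ) < (b : ℕ) := hab
    rcases eq_or_lt_of_le (Nat.succ_le_of_lt hab') with h1 | h1
    · exact adj_incr γ w₂ hw₂ a b h1 hg
    · have hm : (a : ℕ) + 1 < r := lt_of_lt_of_le h1 (Nat.le_of_lt b.isLt)
      set m : Fin r := ⟨(a : ℕ) + 1, hm⟩ with hmdef
      have ham : (a : ℕ) + 1 = (m : ℕ) := rfl
      have hmb : m < b := Fin.lt_def.mpr h1
      have hgm : γ a = γ m := le_antisymm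
        (hg ▸ hγ (le_of_lt hmb)) (hγ (Fin.le_def.mpr (by omega)))
      have h2 : w₂ a < w₂ m := adj_incr γ w₂ hw₂ a m ham hgm
      have h3 : w₂ m < w₂ b :=
        ih ((b : ℕ) - (m : ℕ)) (by omega) m b rfl hmb (hgm ▸ hg)
      exact h2.trans h3

/-- The adjacent step of almost dominance. -/
lemma adj_lam {r : ℕ} (w₂ : Equiv.Perm (Fin r)) (lam : Fin r → ℤ)
    (hlam : AlmostDominant w₂ lam) (i j : Fin r) (hij : (i : ℕ) + 1 = (j : ℕ)) :
    lam j ≤ lam i + 1 ∧ (lam j = lam i + 1 → w₂⁻¹ j < w₂⁻¹ i) := by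
  have hj : (i : ℕ) + 1 < r := hij ▸ j.isLt
  have hi' : (⟨(i : ℕ), by omega⟩ : Fin r) = i := rfl
  have hj' : (⟨(i : ℕ) + 1, hj⟩ : Fin r) = j := Fin.ext hij
  have h := hlam i.val hj
  rw [hi', hj'] at h
  rcases lt_trichotomy (w₂⁻¹ i) (w₂⁻¹ j) with h' | h' | h'
  · exact ⟨(h.1 h').trans (by omega), fun e => absurd (h.1 h') (by omega)⟩
  · exact absurd (w₂⁻¹.injective h') (fun e => by subst e; omega)
  · exact ⟨h.2 h', fun _ => h'⟩

/-- Telescoped almost dominance: `λ_j ≤ λ_i + (j - i)`, with equality forcing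
`w₂⁻¹(j) < w₂⁻¹(i)`. -/
lemma lam_steps {r : ℕ} (w₂ : Equiv.Perm (Fin r)) (lam : Fin r → ℤ)
    (hlam : AlmostDominant w₂ lam) :
    ∀ (n : ℕ) (i j : Fin r), (j : ℕ) - (i : ℕ) = n → i < j →
      lam j ≤ lam i + (((j : ℕ) : ℤ) - ((i : ℕ) : ℤ)) ∧
      (lam j = lam i + (((j : ℕ) : ℤ) - ((i : ℕ) : ℤ)) → w₂⁻¹ j < w₂⁻¹ i) := by
  intro n
  induction n using Nat.strong_induction_on with
  | _ n ih =>
    intro i j hn hij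
    have hij' : (i : ℕ) < (j : ℕ) := hij
    rcases eq_or_lt_of_le (Nat.succ_le_of_lt hij') with h1 | h1
    · have := adj_lam w₂ lam hlam i j h1
      constructor
      · have : lam j ≤ lam i + 1 := this.1
        omega
      · intro he
        exact this.2 (by omega)
    · have hm : (i : ℕ) + 1 < r := lt_of_lt_of_le h1 (Nat.le_of_lt j.isLt)
      set m : Fin r := ⟨(i : ℕ) + 1, hm⟩ with hmdef
      have him : (i : ℕ) + 1 = (m : ℕ) := rfl
      have hmj : m < j := Fin.lt_def.mpr h1
      have hadj := adj_lam w₂ lam hlam i m him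
      have hIH := ih ((j : ℕ) - (m : ℕ)) (by omega) m j rfl hmj
      have hmv : ((m : ℕ) : ℤ) = ((i : ℕ) : ℤ) + 1 := by omega
      constructor
      · have := hIH.1; have := hadj.1; omega
      · intro he
        have h2 : lam m = lam i + 1 := by have := hIH.1; have := hadj.1; omega
        have h3 : lam j = lam m + (((j : ℕ) : ℤ) - ((m : ℕ) : ℤ)) := by
          have := hadj.1; omega
        exact (hIH.2 h3).trans (hadj.2 h2)

/-- The main statement, assuming `i < j`. -/
lemma no_repeat_of_lt {r : ℕ} (γ : Fin r → ℤ) (hγ : Antitone γ)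
    (w₂ : Equiv.Perm (Fin r))
    (hw₂ : ∀ (j : ℕ) (hj : j + 1 < r), γ ⟨j, by omega⟩ = γ ⟨j + 1, hj⟩ →
      invLen w₂ < invLen (w₂ * Equiv.swap ⟨j, by omega⟩ ⟨j + 1, hj⟩))
    (lam : Fin r → ℤ) (hlam : AlmostDominant w₂ lam)
    (i j : Fin r) (hij : i < j)
    (hcol : lam i + ((Fin.rev i : ℕ) : ℤ) = lam j + ((Fin.rev j : ℕ) : ℤ)) :
    γ (w₂⁻¹ i) ≠ γ (w₂⁻¹ j) := by
  intro hg
  have hri := Fin.val_rev i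
  have hrj := Fin.val_rev j
  have hiv := i.isLt
  have hjv := j.isLt
  have hij' : (i : ℕ) < (j : ℕ) := hij
  have heq : lam j = lam i + (((j : ℕ) : ℤ) - ((i : ℕ) : ℤ)) := by
    rw [hri, hrj] at hcol; omega
  have hw : w₂⁻¹ j < w₂⁻¹ i := (lam_steps w₂ lam hlam _ i j rfl hij).2 heq
  have h := interval_incr γ hγ w₂ hw₂ _ (w₂⁻¹ j) (w₂⁻¹ i) rfl hw hg.symm
  rw [Equiv.Perm.inv_def, Equiv.apply_symm_apply, Equiv.apply_symm_apply] at h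
  exact absurd h (lt_asymm hij)

/-- Let `γ₁ ≥ … ≥ γ_r` be integers, `J = {i : γ_i = γ_{i+1}}`,
and `W^J = {w ∈ S_r : ℓ(w s_j) > ℓ(w) for all j ∈ J}`.  Suppose `w₂ ∈ W^J` and
`λ ∈ ℤ^r` is `w₂`-almost dominant.  If `i ≠ j` and `λ_i + r − i = λ_j + r − j`
then `γ_{w₂⁻¹(i)} ≠ γ_{w₂⁻¹(j)}`. -/
theorem no_repeated_colors_in_same_column
    (r : ℕ) (γ : Fin r → ℤ) (hγ : Antitone γ)
    (w₂ : Equiv.Perm (Fin r))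
    (hw₂ : ∀ (j : ℕ) (hj : j + 1 < r), γ ⟨j, by omega⟩ = γ ⟨j + 1, hj⟩ →
      invLen w₂ < invLen (w₂ * Equiv.swap ⟨j, by omega⟩ ⟨j + 1, hj⟩))
    (lam : Fin r → ℤ) (hlam : AlmostDominant w₂ lam)
    (i j : Fin r) (hij : i ≠ j)
    (hcol : lam i + ((Fin.rev i : ℕ) : ℤ) = lam j + ((Fin.rev j : ℕ) : ℤ)) :
    γ (w₂⁻¹ i) ≠ γ (w₂⁻¹ j) := by
  rcases hij.lt_or_gt with h | h
  · exact no_repeat_of_lt γ hγ w₂ hw₂ lam hlam i j h hcol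
  · exact (no_repeat_of_lt γ hγ w₂ hw₂ lam hlam j i h hcol.symm).symm
end
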